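/- arXiv:2101.09443 — 10 statements merged into one kernel-verified Lean document; each statement's English description precedes it below -/
import Mathlib

section
/- If u₊²(ρ₊+n₊) > A₁γρ₊^γ + A₂αn₊^α (supersonic case M₊>1), then the multiset of complex eigenvalues of J₊ consists of one real eigenvalue λ₃ > 0 together with two eigenvalues λ₁, λ₂ satisfying Re λ₁ < 0 and Re λ₂ < 0. -/
open Polynomial Matrix

/-- The matrix `J₊` from the linearization of the steady-state system. -/
noncomputable def Jplus (A₁ A₂ γ α μ ρp np up : ℝ) : Matrix (Fin 3) (Fin 3) ℝ :=
  !![0, 1, 0;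
     np / μ, (ρp * up ^ 2 - A₁ * γ * ρp ^ γ) / (μ * up), -(np / μ);
     (ρp * up ^ 2 - A₁ * γ * ρp ^ γ) / (np * up), -(μ / np),
       (np * up ^ 2 - A₂ * α * np ^ α) / (np * up)]

lemma Jplus_charpoly (A₁ A₂ γ α μ ρp np up : ℝ) (hμ : μ ≠ 0) (hn : np ≠ 0) (hu : up ≠ 0) :
    (Jplus A₁ A₂ γ α μ ρp np up).charpoly =
      X^3 + C (-((ρp * up ^ 2 - A₁ * γ * ρp ^ γ) / (μ * up) + (np * up ^ 2 - A₂ * α * np ^ α) / (np * up))) * X^2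
        + C ((ρp * up ^ 2 - A₁ * γ * ρp ^ γ) / (μ * up) * ((np * up ^ 2 - A₂ * α * np ^ α) / (np * up)) - 1 - np/μ) * X
        + C ((ρp * up ^ 2 - A₁ * γ * ρp ^ γ) / (μ * up) + np/μ * ((np * up ^ 2 - A₂ * α * np ^ α) / (np * up))) := by
  have h1 : np / μ * (μ / np) = 1 := by field_simp
  have h2 : np / μ * ((ρp * up ^ 2 - A₁ * γ * ρp ^ γ) / (np * up)) =
      (ρp * up ^ 2 - A₁ * γ * ρp ^ γ) / (μ * up) := by field_simp
  have h1' : C (np / μ) * C (μ / np) = 1 := by rw [← C_mul, h1, Polynomial.C_1]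
  have h2' : C (np / μ) * C ((ρp * up ^ 2 - A₁ * γ * ρp ^ γ) / (np * up)) =
      C ((ρp * up ^ 2 - A₁ * γ * ρp ^ γ) / (μ * up)) := by rw [← C_mul, h2]
  rw [Matrix.charpoly, Matrix.det_fin_three]
  simp [Jplus, charmatrix_apply, Matrix.diagonal]
  linear_combination (h2' - (X : ℝ[X]) * h1')

/-- Two complex numbers with a negative real sum and positive real product
have negative real parts. -/
lemma pair_neg_re (z w : ℂ) (s q : ℝ) (hs : s < 0) (hq : 0 < q)
    (h1 : z + w = (s : ℂ)) (h2 : z * w = (q : ℂ)) : z.re < 0 ∧ w.re < 0 := by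
  have h1re : z.re + w.re = s := by simpa using congrArg Complex.re h1
  have h1im : z.im + w.im = 0 := by simpa using congrArg Complex.im h1
  have h2re : z.re * w.re - z.im * w.im = q := by
    simpa [Complex.mul_re] using congrArg Complex.re h2
  have h2im : z.re * w.im + z.im * w.re = 0 := by
    simpa [Complex.mul_im] using congrArg Complex.im h2
  by_cases hzi : z.im = 0
  · have hwi : w.im = 0 := by linarith
    have hprod : z.re * w.re = q := by rw [hzi, hwi] at h2re; linarith
    constructor <;> nlinarith [sq_nonneg (z.re + w.re), sq_nonneg (z.re - w.re)]
  · have hw : w.im = -z.im := by linarith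
    have hzz : z.im * (w.re - z.re) = 0 := by rw [hw] at h2im; linear_combination h2im
    have hre : w.re = z.re := by
      rcases mul_eq_zero.mp hzz with h | h
      · exact absurd h hzi
      · linarith
    constructor <;> nlinarith

/-- Roots of a monic complex cubic with a known real root `t` dominating
`-c₂`, and `c₀ < 0`. -/
lemma cubic_roots (c₂ c₁ c₀ t : ℝ) (ht : t^3 + c₂*t^2 + c₁*t + c₀ = 0)
    (ht0 : 0 < t) (hts : -c₂ < t) (hc₀ : c₀ < 0) :
    ∃ l₁ l₂ : ℂ,
      (X^3 + C (c₂:ℂ)*X^2 + C (c₁:ℂ)*X + C (c₀:ℂ)).roots = {l₁, l₂, (t:ℂ)} ∧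
      l₁.re < 0 ∧ l₂.re < 0 := by
  set qc : ℂ[X] := X^3 + C (c₂:ℂ)*X^2 + C (c₁:ℂ)*X + C (c₀:ℂ) with hqc
  have hmonic : qc.Monic := by
    unfold qc; monicity!
  have hdeg : qc.natDegree = 3 := by
    unfold qc; compute_degree!
  have hne : qc ≠ 0 := hmonic.ne_zero
  have hcard : Multiset.card qc.roots = 3 := by
    rw [← hdeg]
    exact (Polynomial.splits_iff_card_roots).mp (IsAlgClosed.splits qc)
  have hTroot : (t : ℂ) ∈ qc.roots := by
    rw [Polynomial.mem_roots hne]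
    unfold qc
    simp only [IsRoot, eval_add, eval_mul, eval_pow, eval_X, eval_C]
    have : ((t:ℂ)^3 + (c₂:ℂ)*(t:ℂ)^2 + (c₁:ℂ)*(t:ℂ) + (c₀:ℂ)) = ((t^3 + c₂*t^2 + c₁*t + c₀ : ℝ) : ℂ) := by
      push_cast; ring
    rw [this, ht]; simp
  obtain ⟨sm, hsm⟩ := Multiset.exists_cons_of_mem hTroot
  have hsmcard : Multiset.card sm = 2 := by
    have := hcard
    rw [hsm] at this
    simpa using this
  obtain ⟨l₁, l₂, hl⟩ := Multiset.card_eq_two.mp hsmcard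
  have hroots : qc.roots = {l₁, l₂, (t:ℂ)} := by
    rw [hsm, hl]
    show (t:ℂ) ::ₘ l₁ ::ₘ l₂ ::ₘ 0 = l₁ ::ₘ l₂ ::ₘ (t:ℂ) ::ₘ 0
    rw [Multiset.cons_swap (t:ℂ) l₁, Multiset.cons_swap (t:ℂ) l₂]
  have hfact : (qc.roots.map fun a => X - C a).prod = qc :=
    prod_multiset_X_sub_C_of_monic_of_roots_card_eq hmonic (by rw [hcard, hdeg])
  rw [hroots] at hfact
  have hexp : (Multiset.map (fun a => X - C a) ({l₁, l₂, (t:ℂ)} : Multiset ℂ)).prod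
      = (X - C l₁) * ((X - C l₂) * (X - C (t:ℂ))) := by
    simp [Multiset.insert_eq_cons, mul_assoc]
  rw [hexp] at hfact
  have hexp2 : (X - C l₁) * ((X - C l₂) * (X - C (t:ℂ)))
      = X^3 + C (-(l₁ + l₂ + (t:ℂ)))*X^2 + C (l₁*l₂ + l₁*(t:ℂ) + l₂*(t:ℂ))*X
        + C (-(l₁*l₂*(t:ℂ))) := by
    simp only [Polynomial.C_neg, Polynomial.C_add, Polynomial.C_mul]; ring
  rw [hexp2, hqc] at hfact
  have hco2 := congrArg (fun p => Polynomial.coeff p 2) hfact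
  have hco0 := congrArg (fun p => Polynomial.coeff p 0) hfact
  simp only [coeff_add, coeff_C_mul, coeff_X_pow, coeff_X, coeff_C] at hco2 hco0
  norm_num at hco2 hco0
  have ht0' : (t:ℂ) ≠ 0 := by exact_mod_cast ht0.ne'
  have hsum : l₁ + l₂ = ((-c₂ - t : ℝ) : ℂ) := by push_cast; linear_combination -hco2
  have hprod : l₁ * l₂ = ((-c₀/t : ℝ) : ℂ) := by
    rw [Complex.ofReal_div, eq_div_iff ht0']
    push_cast
    linear_combination -hco0
  obtain ⟨hre1, hre2⟩ := pair_neg_re l₁ l₂ (-c₂ - t) (-c₀/t) (by linarith)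
    (div_pos (by linarith) ht0) hsum hprod
  exact ⟨l₁, l₂, hroots, hre1, hre2⟩

set_option maxHeartbeats 1600000 in
/-- in the supersonic case `M₊ > 1`, the eigenvalues of `J₊`
consist of one positive real eigenvalue and two eigenvalues with negative
real parts. -/
theorem stmt1 (A₁ A₂ γ α μ ρp np up : ℝ)
    (hA₁ : 0 < A₁) (hA₂ : 0 < A₂) (hγ : 1 ≤ γ) (hα : 1 ≤ α) (hμ : 0 < μ)
    (hρ : 0 < ρp) (hn : 0 < np) (hu : up < 0)
    (hsup : A₁ * γ * ρp ^ γ + A₂ * α * np ^ α < up ^ 2 * (ρp + np)) :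
    ∃ l₁ l₂ l₃ : ℂ,
      ((Jplus A₁ A₂ γ α μ ρp np up).map Complex.ofReal).charpoly.roots = {l₁, l₂, l₃} ∧
      l₁.re < 0 ∧ l₂.re < 0 ∧ l₃.im = 0 ∧ 0 < l₃.re := by
  have hchar := Jplus_charpoly A₁ A₂ γ α μ ρp np up hμ.ne' hn.ne' hu.ne
  set P := ρp * up ^ 2 - A₁ * γ * ρp ^ γ with hPdef
  set N := np * up ^ 2 - A₂ * α * np ^ α with hNdef
  set a := P / (μ * up) with hadef
  set d := N / (np * up) with hddef
  set b := np / μ with hbdef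
  set c₂ := -(a + d) with hc₂def
  set c₁ := a * d - 1 - b with hc₁def
  set c₀ := a + b * d with hc₀def
  -- basic sign facts
  have hup2 : 0 < up ^ 2 := by nlinarith
  have hPN : 0 < P + N := by rw [hPdef, hNdef]; nlinarith
  have hμu : μ * up < 0 := mul_neg_of_pos_of_neg hμ hu
  have hc₀neg : c₀ < 0 := by
    have h : c₀ = (P + N) / (μ * up) := by
      rw [hc₀def, hadef, hbdef, hddef]
      field_simp [hμ.ne', hn.ne', hu.ne]
    rw [h]
    exact div_neg_of_pos_of_neg hPN hμu
  -- the key inequality: if 0 < -c₂ then c₀ - c₁ * c₂ < 0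
  have hkey : 0 < -c₂ → c₀ - c₁ * c₂ < 0 := by
    intro hpos
    have hS : P * np + N * μ < 0 := by
      have had : a + d = (P * np + N * μ) / (μ * np * up) := by
        rw [hadef, hddef]; field_simp [hμ.ne', hn.ne', hu.ne]
      by_contra hcon
      push_neg at hcon
      have hden : μ * np * up < 0 := mul_neg_of_pos_of_neg (mul_pos hμ hn) hu
      have : a + d ≤ 0 := by
        rw [had]
        exact div_nonpos_of_nonneg_of_nonpos hcon hden.le
      rw [hc₂def] at hpos
      linarith
    have h1 : 0 < N * (np - μ) := by nlinarith
    have h2 : 0 < P * (μ - np) := by nlinarith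
    have haP : P = a * (μ * up) := by
      rw [hadef, div_mul_cancel₀ _ (mul_ne_zero hμ.ne' hu.ne)]
    have hdN : N = d * (np * up) := by
      rw [hddef, div_mul_cancel₀ _ (mul_ne_zero hn.ne' hu.ne)]
    have hbn : np = b * μ := by
      rw [hbdef, div_mul_cancel₀ _ hμ.ne']
    have hE : (c₀ - c₁ * c₂) * (μ ^ 2 * np ^ 2 * up ^ 3) =
        P * N * (P * np + N * μ) - up ^ 2 * np * (N * μ ^ 2 + P * np ^ 2) := by
      rw [hc₀def, hc₁def, hc₂def]
      rw [haP, hdN, hbn]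
      ring
    have hD : μ ^ 2 * np ^ 2 * up ^ 3 < 0 := by
      have hup3 : up ^ 3 < 0 := by nlinarith
      exact mul_neg_of_pos_of_neg (by positivity) hup3
    have hG : 0 < P * N * (P * np + N * μ) - up ^ 2 * np * (N * μ ^ 2 + P * np ^ 2) := by
      rcases lt_trichotomy μ np with hlt | heq | hgt
      · have hNpos : 0 < N := by
          rcases mul_pos_iff.mp h1 with ⟨h, _⟩ | ⟨_, h⟩
          · exact h
          · linarith
        have hPneg : P < 0 := by
          rcases mul_pos_iff.mp h2 with ⟨_, h⟩ | ⟨h, _⟩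
          · linarith
          · exact h
        have h3 : (P * np + N * μ) * np < 0 := mul_neg_of_neg_of_pos hS hn
        have h4 : N * μ * (μ - np) < 0 :=
          mul_neg_of_pos_of_neg (mul_pos hNpos hμ) (by linarith)
        have hsumneg : N * μ ^ 2 + P * np ^ 2 < 0 := by nlinarith
        have hPNS : 0 < P * N * (P * np + N * μ) :=
          mul_pos_of_neg_of_neg (mul_neg_of_neg_of_pos hPneg hNpos) hS
        have h5 : up ^ 2 * np * (N * μ ^ 2 + P * np ^ 2) < 0 :=
          mul_neg_of_pos_of_neg (mul_pos hup2 hn) hsumneg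
        linarith
      · exfalso
        have : P * np + N * μ = np * (P + N) := by rw [heq]; ring
        nlinarith [mul_pos hn hPN]
      · have hNneg : N < 0 := by
          rcases mul_pos_iff.mp h1 with ⟨_, h⟩ | ⟨h, _⟩
          · linarith
          · exact h
        have hPpos : 0 < P := by
          rcases mul_pos_iff.mp h2 with ⟨h, _⟩ | ⟨_, h⟩
          · exact h
          · linarith
        have h3 : (P * np + N * μ) * μ < 0 := mul_neg_of_neg_of_pos hS hμ
        have h4 : P * np * (np - μ) < 0 :=
          mul_neg_of_pos_of_neg (mul_pos hPpos hn) (by linarith)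
        have hsumneg : N * μ ^ 2 + P * np ^ 2 < 0 := by nlinarith
        have hPNS : 0 < P * N * (P * np + N * μ) :=
          mul_pos_of_neg_of_neg (mul_neg_of_pos_of_neg hPpos hNneg) hS
        have h5 : up ^ 2 * np * (N * μ ^ 2 + P * np ^ 2) < 0 :=
          mul_neg_of_pos_of_neg (mul_pos hup2 hn) hsumneg
        linarith
    nlinarith [hG, hD, hE]
  -- find a real root t with t > max 0 (-c₂)
  set q : ℝ[X] := X ^ 3 + C c₂ * X ^ 2 + C c₁ * X + C c₀ with hqdef
  have heval : ∀ x : ℝ, q.eval x = x ^ 3 + c₂ * x ^ 2 + c₁ * x + c₀ := by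
    intro x; simp [hqdef]
  have hqmonic : q.Monic := by rw [hqdef]; monicity!
  have hqdeg : q.degree = 3 := by rw [hqdef]; compute_degree!
  have htends : Filter.Tendsto (fun x => q.eval x) Filter.atTop Filter.atTop := by
    apply Polynomial.tendsto_atTop_of_leadingCoeff_nonneg
    · rw [hqdeg]; norm_num
    · rw [hqmonic.leadingCoeff]; norm_num
  set t₀ : ℝ := max 0 (-c₂) with ht₀def
  have ht₀f : q.eval t₀ < 0 := by
    rcases max_cases 0 (-c₂) with ⟨h1, h2⟩ | ⟨h1, h2⟩
    · rw [ht₀def, h1, heval]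
      nlinarith [hc₀neg]
    · rw [ht₀def, h1, heval]
      nlinarith [hkey h2]
  obtain ⟨M, hM⟩ := ((htends.eventually_gt_atTop 0).and (Filter.eventually_ge_atTop t₀)).exists
  have hcont : ContinuousOn (fun x => q.eval x) (Set.Icc t₀ M) :=
    (Polynomial.continuous q).continuousOn
  have hmem : (0 : ℝ) ∈ Set.Icc (q.eval t₀) (q.eval M) := ⟨ht₀f.le, hM.1.le⟩
  obtain ⟨t, htmem, hteq⟩ := intermediate_value_Icc hM.2 hcont hmem
  have hteq' : q.eval t = 0 := by simpa using hteq
  have htgt : t₀ < t := by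
    rcases lt_or_eq_of_le htmem.1 with h | h
    · exact h
    · exfalso; rw [← h] at hteq'; linarith
  have ht0 : 0 < t := lt_of_le_of_lt (le_max_left 0 (-c₂)) htgt
  have hts : -c₂ < t := lt_of_le_of_lt (le_max_right 0 (-c₂)) htgt
  have hroot : t ^ 3 + c₂ * t ^ 2 + c₁ * t + c₀ = 0 := by rw [← heval]; exact hteq'
  obtain ⟨l₁, l₂, hroots, hre1, hre2⟩ := cubic_roots c₂ c₁ c₀ t hroot ht0 hts hc₀neg
  -- identify the complex charpoly
  have hcomplex : ((Jplus A₁ A₂ γ α μ ρp np up).map Complex.ofReal).charpoly =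
      X ^ 3 + C (c₂ : ℂ) * X ^ 2 + C (c₁ : ℂ) * X + C (c₀ : ℂ) := by
    have hcast : (Jplus A₁ A₂ γ α μ ρp np up).map Complex.ofReal =
        (Jplus A₁ A₂ γ α μ ρp np up).map (Complex.ofRealHom : ℝ →+* ℂ) := rfl
    rw [hcast, Matrix.charpoly_map, hchar, hqdef]
    simp only [Polynomial.map_add, Polynomial.map_mul, Polynomial.map_pow,
      Polynomial.map_X, Polynomial.map_C]
    rfl
  refine ⟨l₁, l₂, (t : ℂ), ?_, hre1, hre2, Complex.ofReal_im t, ?_⟩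
  · rw [hcomplex]; exact hroots
  · simpa using ht0
end

section
/- If u₊²(ρ₊+n₊) < A₁γρ₊^γ + A₂αn₊^α (subsonic case M₊<1), then the multiset of complex eigenvalues of J₊ consists of one real eigenvalue λ₃ < 0 together with two eigenvalues λ₁, λ₂ satisfying Re λ₁ > 0 and Re λ₂ > 0. -/
set_option maxHeartbeats 1000000
open Polynomial Matrix

private lemma charpoly_aux (a b c d m : ℝ) :
    ((!![(0:ℝ),1,0; b, a, -b; c, -m, d]).map Complex.ofReal).charpoly
      = X^3 - C ((a+d:ℝ):ℂ)*X^2 + C ((a*d-b*m-b:ℝ):ℂ)*X + C ((b*(c+d):ℝ):ℂ) := by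
  rw [Matrix.charpoly, Matrix.det_fin_three]
  simp [charmatrix_apply_eq, charmatrix_apply_ne, Matrix.map_apply]
  ring

private lemma cubic_aux (s e f : ℝ) (hf : 0 < f) (hse : s ≤ 0 → e ≤ 0) :
    ∃ l₁ l₂ l₃ : ℂ,
      ((X:ℂ[X])^3 - C (s:ℂ)*X^2 + C (e:ℂ)*X + C (f:ℂ)).roots = {l₁, l₂, l₃} ∧
      0 < l₁.re ∧ 0 < l₂.re ∧ l₃.im = 0 ∧ l₃.re < 0 := by
  set p : ℝ → ℝ := fun x => x^3 - s*x^2 + e*x + f with hp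
  have hcont : Continuous p := by fun_prop
  set r : ℝ := 1 + |s| + |e| + |f| with hr
  have hr1 : 1 ≤ r := by
    have := abs_nonneg s; have := abs_nonneg e; have := abs_nonneg f; linarith
  have h2 : r ≤ r^2 := by nlinarith
  have hr2 : (1:ℝ) ≤ r^2 := by nlinarith
  have hpT : p (-r) < 0 := by
    have hs4 : -s*r^2 ≤ |s| * r^2 := mul_le_mul_of_nonneg_right (neg_le_abs s) (sq_nonneg r)
    have he4 : -e*r ≤ |e| * r^2 := by
      calc -e*r ≤ |e| * r := mul_le_mul_of_nonneg_right (neg_le_abs e) (by linarith)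
        _ ≤ |e| * r^2 := mul_le_mul_of_nonneg_left h2 (abs_nonneg e)
    have hf4 : f ≤ |f| * r^2 := le_trans (le_abs_self f) (le_mul_of_one_le_right (abs_nonneg f) hr2)
    have hpeq : p (-r) = -r^3 + (-s*r^2) + (-e*r) + f := by unfold p; ring
    have hsum : -r^3 + |s| * r^2 + |e| * r^2 + |f| * r^2 = -r^2 := by rw [hr]; ring
    nlinarith
  set R : ℝ := min s 0 with hR
  have hpR : 0 < p R := by
    rcases le_or_gt s 0 with h | h
    · have hRs : R = s := min_eq_left h
      have hps : p s = e*s + f := by unfold p; ring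
      have he := hse h
      have : 0 ≤ e * s := by nlinarith [mul_nonneg (neg_nonneg.2 he) (neg_nonneg.2 h)]
      rw [hRs, hps]; linarith
    · have hR0 : R = 0 := min_eq_right h.le
      have : p 0 = f := by unfold p; ring
      rw [hR0, this]; exact hf
  have hTR : -r < R := by
    apply lt_min
    · nlinarith [neg_abs_le s, abs_nonneg e, abs_nonneg f]
    · linarith
  obtain ⟨l, hlmem, hl⟩ := intermediate_value_Ioo hTR.le hcont.continuousOn ⟨hpT, hpR⟩
  have hlR : l < R := hlmem.2
  have hl0 : l < 0 := lt_of_lt_of_le hlR (min_le_right _ _)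
  have hls : l < s := lt_of_lt_of_le hlR (min_le_left _ _)
  have hlne : l ≠ 0 := ne_of_lt hl0
  set σ : ℝ := s - l with hσ
  have hσ0 : 0 < σ := by simp only [hσ]; linarith
  set q : ℝ := -f / l with hqdef
  have hq0 : 0 < q := div_pos_of_neg_of_neg (by linarith) hl0
  have hfq : f = -(q * l) := by rw [hqdef, div_mul_cancel₀ _ hlne]; ring
  have hplz : l^3 - s*l^2 + e*l + f = 0 := hl
  have he : e = q + σ * l := by
    have h1 : e * l = (q + σ * l) * l := by
      have hql : q * l = -f := by rw [hqdef, div_mul_cancel₀ _ hlne]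
      nlinarith [hplz, hql]
    exact mul_right_cancel₀ hlne h1
  obtain ⟨w, hw⟩ := IsAlgClosed.exists_pow_nat_eq ((σ^2 - 4*q : ℝ) : ℂ) (n := 2) (by norm_num)
  set l₁ : ℂ := ((2⁻¹:ℝ):ℂ) * ((σ:ℂ) + w) with hl₁
  set l₂ : ℂ := ((2⁻¹:ℝ):ℂ) * ((σ:ℂ) - w) with hl₂
  have hwC : w^2 = (σ:ℂ)^2 - 4*(q:ℂ) := by rw [hw]; push_cast; ring
  have hsC : (s:ℂ) = (σ:ℂ) + (l:ℂ) := by push_cast [hσ]; ring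
  have heC : (e:ℂ) = (q:ℂ) + (σ:ℂ)*(l:ℂ) := by exact_mod_cast congrArg (Complex.ofReal) he
  have hfC : (f:ℂ) = -((q:ℂ)*(l:ℂ)) := by exact_mod_cast congrArg (Complex.ofReal) hfq
  have key : (X:ℂ[X])^3 - C (s:ℂ)*X^2 + C (e:ℂ)*X + C (f:ℂ)
      = (X - C l₁) * (X - C l₂) * (X - C (l:ℂ)) := by
    apply Polynomial.funext; intro x
    simp only [eval_add, eval_sub, eval_mul, eval_pow, eval_X, eval_C]
    rw [hl₁, hl₂]
    push_cast
    linear_combination (-x^2) * hsC + x * heC + hfC + ((x - (l:ℂ))/4) * hwC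
  have hwim : w.re * w.im = 0 := by
    have h1 : (w^2).im = 0 := by rw [hw]; exact Complex.ofReal_im _
    have h2 : (w^2).im = 2*(w.re*w.im) := by rw [sq, Complex.mul_im]; ring
    linarith [h2 ▸ h1]
  have hwre : w.re^2 - w.im^2 = σ^2 - 4*q := by
    have h1 : (w^2).re = σ^2 - 4*q := by rw [hw]; exact Complex.ofReal_re _
    have h2 : (w^2).re = w.re^2 - w.im^2 := by rw [sq, Complex.mul_re]; ring
    linarith [h2 ▸ h1]
  have hl₁re : l₁.re = 2⁻¹ * (σ + w.re) := by
    rw [hl₁, Complex.re_ofReal_mul]; simp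
  have hl₂re : l₂.re = 2⁻¹ * (σ - w.re) := by
    rw [hl₂, Complex.re_ofReal_mul]; simp
  have hwlt : w.re < σ ∧ -σ < w.re := by
    rcases mul_eq_zero.1 hwim with h | h
    · rw [h]; constructor <;> linarith
    · rw [h] at hwre
      have hsq : w.re^2 < σ^2 := by nlinarith
      constructor <;> nlinarith
  refine ⟨l₁, l₂, (l:ℂ), ?_, by rw [hl₁re]; nlinarith [hwlt.2], by rw [hl₂re]; nlinarith [hwlt.1], by simp, by simpa using hl0⟩
  rw [key, roots_mul (by apply mul_ne_zero <;> first | exact X_sub_C_ne_zero _ | apply mul_ne_zero <;> exact X_sub_C_ne_zero _),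
      roots_mul (mul_ne_zero (X_sub_C_ne_zero _) (X_sub_C_ne_zero _)), roots_X_sub_C, roots_X_sub_C, roots_X_sub_C]
  rfl

/-- in the subsonic case `M₊ < 1`, the eigenvalues of `J₊`
consist of one negative real eigenvalue and two eigenvalues with positive
real parts. -/
theorem stmt2 (A₁ A₂ γ α μ ρp np up : ℝ)
    (hA₁ : 0 < A₁) (hA₂ : 0 < A₂) (hγ : 1 ≤ γ) (hα : 1 ≤ α) (hμ : 0 < μ)
    (hρ : 0 < ρp) (hn : 0 < np) (hu : up < 0)
    (hsub : up ^ 2 * (ρp + np) < A₁ * γ * ρp ^ γ + A₂ * α * np ^ α) :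
    ∃ l₁ l₂ l₃ : ℂ,
      ((Jplus A₁ A₂ γ α μ ρp np up).map Complex.ofReal).charpoly.roots = {l₁, l₂, l₃} ∧
      0 < l₁.re ∧ 0 < l₂.re ∧ l₃.im = 0 ∧ l₃.re < 0 := by
  have hu0 : up ≠ 0 := ne_of_lt hu
  have hμ0 : μ ≠ 0 := ne_of_gt hμ
  have hn0 : np ≠ 0 := ne_of_gt hn
  set P₁ := A₁ * γ * ρp ^ γ with hP₁
  set P₂ := A₂ * α * np ^ α with hP₂
  set a := (ρp * up ^ 2 - P₁) / (μ * up) with ha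
  set b := np / μ with hb
  set c := (ρp * up ^ 2 - P₁) / (np * up) with hc
  set d := (np * up ^ 2 - P₂) / (np * up) with hd
  set m := μ / np with hm
  have hb0 : 0 < b := by rw [hb]; positivity
  have hbm : b * m = 1 := by rw [hb, hm]; field_simp
  have hac : c = a * m := by rw [hc, ha, hm]; field_simp
  have hcd : 0 < c + d := by
    have h1 : c + d = (ρp * up ^ 2 - P₁ + (np * up ^ 2 - P₂)) / (np * up) := by
      rw [hc, hd, ← add_div]
    rw [h1]
    apply div_pos_of_neg_of_neg
    · nlinarith
    · exact mul_neg_of_pos_of_neg hn hu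
  have hf : 0 < b * (c + d) := mul_pos hb0 hcd
  have hse : a + d ≤ 0 → a * d - b * m - b ≤ 0 := by
    intro hs
    by_contra hcon
    push_neg at hcon
    have had : 0 < a * d := by nlinarith
    have ha0 : a < 0 := by nlinarith
    have hd0 : d < 0 := by nlinarith
    have hm0 : 0 < m := by rw [hm]; positivity
    have : c < 0 := by rw [hac]; exact mul_neg_of_neg_of_pos ha0 hm0
    linarith
  have hJ : Jplus A₁ A₂ γ α μ ρp np up = !![0, 1, 0; b, a, -b; c, -m, d] := rfl
  rw [hJ, charpoly_aux]
  obtain ⟨l₁, l₂, l₃, h1, h2, h3, h4, h5⟩ :=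
    cubic_aux (a + d) (a * d - b * m - b) (b * (c + d)) hf hse
  exact ⟨l₁, l₂, l₃, h1, h2, h3, h4, h5⟩
end

section
/- If u₊²(ρ₊+n₊) = A₁γρ₊^γ + A₂αn₊^α (sonic case M₊=1), then all three eigenvalues of J₊ are real, and they can be listed as λ₁ > 0, λ₂ < 0, and λ₃ = 0. -/
open Polynomial Matrix

theorem aux3 (a b c d e l₁ l₂ : ℂ) (h1 : l₁ + l₂ = a + e)
    (h2 : l₁ * l₂ = a * e - b * d - b) (h3 : c = -e) :
    (!![0, 1, 0; b, a, -b; c, -d, e] : Matrix (Fin 3) (Fin 3) ℂ).charpoly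
    = X * (X - C l₁) * (X - C l₂) := by
  have key : (!![0, 1, 0; b, a, -b; c, -d, e] : Matrix (Fin 3) (Fin 3) ℂ).charpoly
      = X^3 - (C a + C e) * X^2 + (C a * C e - C b * C d - C b) * X + (C b * C e + C b * C c) := by
    rw [Matrix.charpoly, Matrix.det_fin_three]
    simp [charmatrix_apply_eq, charmatrix_apply_ne]
    ring
  have h1' : C l₁ + C l₂ = C a + C e := by rw [← C_add, ← C_add, h1]
  have h2' : C l₁ * C l₂ = C a * C e - C b * C d - C b := by
    rw [← C_mul, ← C_mul, ← C_mul, ← C_sub, ← C_sub, h2]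
  have h3' : (C c : ℂ[X]) = - C e := by rw [h3, C_neg]
  rw [key]
  linear_combination (X^2 : ℂ[X]) * h1' - (X : ℂ[X]) * h2' + (C b : ℂ[X]) * h3'

/-- in the sonic case `M₊ = 1`, all three eigenvalues of `J₊`
are real and can be listed as `λ₁ > 0`, `λ₂ < 0` and `λ₃ = 0`. -/
theorem stmt3 (A₁ A₂ γ α μ ρp np up : ℝ)
    (hA₁ : 0 < A₁) (hA₂ : 0 < A₂) (hγ : 1 ≤ γ) (hα : 1 ≤ α) (hμ : 0 < μ)
    (hρ : 0 < ρp) (hn : 0 < np) (hu : up < 0)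
    (hson : up ^ 2 * (ρp + np) = A₁ * γ * ρp ^ γ + A₂ * α * np ^ α) :
    ∃ l₁ l₂ : ℝ,
      ((Jplus A₁ A₂ γ α μ ρp np up).map Complex.ofReal).charpoly.roots =
        {(l₁ : ℂ), (l₂ : ℂ), 0} ∧
      0 < l₁ ∧ l₂ < 0 := by
  have hu0 : up ≠ 0 := ne_of_lt hu
  have hμ0 : μ ≠ 0 := ne_of_gt hμ
  have hn0 : np ≠ 0 := ne_of_gt hn
  obtain ⟨P, hP⟩ : ∃ x : ℝ, x = ρp * up ^ 2 - A₁ * γ * ρp ^ γ := ⟨_, rfl⟩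
  obtain ⟨a, ha⟩ : ∃ x : ℝ, x = P / (μ * up) := ⟨_, rfl⟩
  obtain ⟨b, hb⟩ : ∃ x : ℝ, x = np / μ := ⟨_, rfl⟩
  obtain ⟨c, hc⟩ : ∃ x : ℝ, x = P / (np * up) := ⟨_, rfl⟩
  obtain ⟨d, hd⟩ : ∃ x : ℝ, x = μ / np := ⟨_, rfl⟩
  obtain ⟨e, he⟩ : ∃ x : ℝ, x = (np * up ^ 2 - A₂ * α * np ^ α) / (np * up) := ⟨_, rfl⟩
  have hPQ : np * up ^ 2 - A₂ * α * np ^ α = -P := by rw [hP]; linear_combination hson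
  have hce : c = -e := by rw [hc, he, hPQ]; ring
  have hbd : b * d = 1 := by rw [hb, hd]; field_simp
  have hb0 : 0 < b := by rw [hb]; exact div_pos hn hμ
  have hae : a * e ≤ 0 := by
    have h' : a * e = -(P ^ 2 / (μ * np * up ^ 2)) := by
      rw [ha, he, hPQ]; field_simp
    rw [h', neg_nonpos]
    positivity
  obtain ⟨q, hq⟩ : ∃ x : ℝ, x = a * e - 1 - b := ⟨_, rfl⟩
  have hqneg : q < 0 := by rw [hq]; nlinarith
  obtain ⟨s, hs⟩ : ∃ x : ℝ, x = a + e := ⟨_, rfl⟩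
  have hDpos : 0 < s ^ 2 - 4 * q := by nlinarith [sq_nonneg s]
  obtain ⟨r, hr⟩ : ∃ x : ℝ, x = Real.sqrt (s ^ 2 - 4 * q) := ⟨_, rfl⟩
  have hrnn : 0 ≤ r := by rw [hr]; exact Real.sqrt_nonneg _
  have hr2 : r ^ 2 = s ^ 2 - 4 * q := by rw [hr]; exact Real.sq_sqrt hDpos.le
  have hprod : (r + s) * (r - s) = -4 * q := by linear_combination hr2
  have hpos : 0 < s + r := by nlinarith [hprod, hqneg, hrnn]
  have hl1 : 0 < (s + r) / 2 := by linarith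
  have hneg : s - r < 0 := by nlinarith [hprod, hqneg, hpos]
  have hl2 : (s - r) / 2 < 0 := by linarith
  refine ⟨(s + r) / 2, (s - r) / 2, ?_, hl1, hl2⟩
  have h1 : (s + r) / 2 + (s - r) / 2 = a + e := by rw [hs]; ring
  have h2 : ((s + r) / 2) * ((s - r) / 2) = a * e - b * d - b := by
    linear_combination (-(1:ℝ)/4) * hr2 + hq + hbd
  have hmap : (Jplus A₁ A₂ γ α μ ρp np up).map Complex.ofReal
      = !![0, 1, 0; (b : ℂ), (a : ℂ), -(b : ℂ); (c : ℂ), -(d : ℂ), (e : ℂ)] := by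
    ext i j
    fin_cases i <;> fin_cases j <;>
      simp [Jplus, ha, hb, hc, hd, he, hP]
  have h1c : (((s + r) / 2 : ℝ) : ℂ) + (((s - r) / 2 : ℝ) : ℂ) = (a : ℂ) + (e : ℂ) := by
    exact_mod_cast h1
  have h2c : (((s + r) / 2 : ℝ) : ℂ) * (((s - r) / 2 : ℝ) : ℂ)
      = (a : ℂ) * (e : ℂ) - (b : ℂ) * (d : ℂ) - (b : ℂ) := by
    exact_mod_cast h2
  have h3c : (c : ℂ) = -(e : ℂ) := by exact_mod_cast hce
  rw [hmap, aux3 (a : ℂ) (b : ℂ) (c : ℂ) (d : ℂ) (e : ℂ) _ _ h1c h2c h3c]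
  rw [Polynomial.roots_mul (by
        exact mul_ne_zero (mul_ne_zero X_ne_zero (X_sub_C_ne_zero _)) (X_sub_C_ne_zero _)),
      Polynomial.roots_mul (mul_ne_zero X_ne_zero (X_sub_C_ne_zero _)),
      Polynomial.roots_X, Polynomial.roots_X_sub_C, Polynomial.roots_X_sub_C]
  simp only [Multiset.insert_eq_cons, ← Multiset.singleton_add]
  abel
end

section
/- The vector (1, 0, 1)ᵀ lies in the kernel of J₊ if and only if (ρ₊+n₊)u₊² = A₁γρ₊^γ + A₂αn₊^α (the sonic condition M₊ = 1). -/
open Matrix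

/-- `(1,0,1)ᵀ` lies in the kernel of `J₊` iff the sonic
condition `(ρ₊+n₊)u₊² = A₁γρ₊^γ + A₂αn₊^α` holds. -/
theorem stmt4 (A₁ A₂ γ α μ ρp np up : ℝ)
    (hA₁ : 0 < A₁) (hA₂ : 0 < A₂) (hγ : 1 ≤ γ) (hα : 1 ≤ α) (hμ : 0 < μ)
    (hρ : 0 < ρp) (hn : 0 < np) (hu : up < 0) :
    (Jplus A₁ A₂ γ α μ ρp np up).mulVec ![1, 0, 1] = 0 ↔
      (ρp + np) * up ^ 2 = A₁ * γ * ρp ^ γ + A₂ * α * np ^ α := by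
  have hnu : np * up ≠ 0 := mul_ne_zero hn.ne' hu.ne
  constructor
  · intro h
    have h2 := congrFun h 2
    simp [Jplus, mulVec, dotProduct, Fin.sum_univ_three] at h2
    field_simp [hu.ne] at h2
    linarith
  · intro h
    funext i
    fin_cases i <;>
      simp [Jplus, mulVec, dotProduct, Fin.sum_univ_three] <;>
      field_simp [hu.ne] <;> linarith
end

section
/- If u₊²(ρ₊+n₊) > A₁γρ₊^γ + A₂αn₊^α (supersonic case M₊>1), then the symmetric matrix M₃ is positive definite. -/
open Matrix

/-- The symmetric matrix `M₃` appearing in the basic weighted energy estimate. -/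
noncomputable def M3 (A₁ A₂ γ α ρp np up : ℝ) : Matrix (Fin 3) (Fin 3) ℝ :=
  !![-(A₁ * γ * ρp ^ (γ - 2) * up), 0, -(A₁ * γ * ρp ^ (γ - 1));
     0, -(A₂ * α * np ^ (α - 2) * up), -(A₂ * α * np ^ (α - 1));
     -(A₁ * γ * ρp ^ (γ - 1)), -(A₂ * α * np ^ (α - 1)), -((ρp + np) * up)]

/-- in the supersonic case `M₊ > 1`, the matrix `M₃` is
positive definite. -/
theorem stmt5 (A₁ A₂ γ α ρp np up : ℝ)
    (hA₁ : 0 < A₁) (hA₂ : 0 < A₂) (hγ : 1 ≤ γ) (hα : 1 ≤ α)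
    (hρ : 0 < ρp) (hn : 0 < np) (hu : up < 0)
    (hsup : A₁ * γ * ρp ^ γ + A₂ * α * np ^ α < up ^ 2 * (ρp + np)) :
    (M3 A₁ A₂ γ α ρp np up).PosDef := by
  rw [Matrix.posDef_iff_dotProduct_mulVec]
  constructor
  · ext i j
    fin_cases i <;> fin_cases j <;>
      simp [M3, Matrix.conjTranspose, Matrix.vecHead, Matrix.vecTail]
  · intro x hx
    have hP : 0 < A₁ * γ * ρp ^ (γ - 2) :=
      mul_pos (mul_pos hA₁ (by linarith)) (Real.rpow_pos_of_pos hρ _)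
    have hQ : 0 < A₂ * α * np ^ (α - 2) :=
      mul_pos (mul_pos hA₂ (by linarith)) (Real.rpow_pos_of_pos hn _)
    have e1 : ρp ^ (γ - 1) = ρp ^ (γ - 2) * ρp := by
      rw [show γ - 1 = (γ - 2) + 1 by ring, Real.rpow_add hρ, Real.rpow_one]
    have e2 : ρp ^ γ = ρp ^ (γ - 2) * ρp * ρp := by
      rw [show γ = (γ - 2) + 1 + 1 by ring, Real.rpow_add hρ, Real.rpow_add hρ, Real.rpow_one]; ring_nf
    have f1 : np ^ (α - 1) = np ^ (α - 2) * np := by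
      rw [show α - 1 = (α - 2) + 1 by ring, Real.rpow_add hn, Real.rpow_one]
    have f2 : np ^ α = np ^ (α - 2) * np * np := by
      rw [show α = (α - 2) + 1 + 1 by ring, Real.rpow_add hn, Real.rpow_add hn, Real.rpow_one]; ring_nf
    simp only [M3, mulVec, dotProduct, Fin.sum_univ_three, star, Pi.star_apply, star_trivial,
      Matrix.cons_val', Matrix.cons_val_zero, Matrix.cons_val_one, Matrix.head_cons,
      Matrix.empty_val', Matrix.cons_val_fin_one, Matrix.head_fin_const, Matrix.cons_val_two,
      Matrix.tail_cons, Matrix.of_apply, id]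
    rw [e2, f2] at hsup
    rw [e1, f1]
    have hu' : 0 < -up := by linarith
    obtain ⟨i, hi⟩ := Function.ne_iff.mp hx
    by_cases h2 : x 2 = 0
    · rw [h2]
      have hi' : x 0 ≠ 0 ∨ x 1 ≠ 0 := by
        fin_cases i
        · exact Or.inl hi
        · exact Or.inr hi
        · exact absurd h2 hi
      rcases hi' with h | h
      · nlinarith [mul_pos hu' (mul_pos hP (mul_self_pos.mpr h)),
          mul_nonneg hu'.le (mul_nonneg hQ.le (mul_self_nonneg (x 1)))]
      · nlinarith [mul_pos hu' (mul_pos hQ (mul_self_pos.mpr h)),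
          mul_nonneg hu'.le (mul_nonneg hP.le (mul_self_nonneg (x 0)))]
    · nlinarith [mul_nonneg hP.le (sq_nonneg (up * x 0 + ρp * x 2)),
        mul_nonneg hQ.le (sq_nonneg (up * x 1 + np * x 2)),
        mul_pos (sub_pos.mpr hsup) (mul_self_pos.mpr h2), hu',
        mul_pos hu' hu']
end

section
/- If u₊²(ρ₊+n₊) = A₁γρ₊^γ + A₂αn₊^α (sonic case M₊=1), then the symmetric matrix M₃ is positive semidefinite, its determinant is zero, and its kernel is one-dimensional; equivalently, M₃ has exactly two strictly positive eigenvalues and the simple eigenvalue 0. -/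
open Matrix

set_option maxHeartbeats 2000000 in
/-- in the sonic case `M₊ = 1`, the matrix `M₃` is positive
semidefinite, has zero determinant and a one-dimensional kernel. -/
theorem stmt6 (A₁ A₂ γ α ρp np up : ℝ)
    (hA₁ : 0 < A₁) (hA₂ : 0 < A₂) (hγ : 1 ≤ γ) (hα : 1 ≤ α)
    (hρ : 0 < ρp) (hn : 0 < np) (hu : up < 0)
    (hson : up ^ 2 * (ρp + np) = A₁ * γ * ρp ^ γ + A₂ * α * np ^ α) :
    (M3 A₁ A₂ γ α ρp np up).PosSemidef ∧
    (M3 A₁ A₂ γ α ρp np up).det = 0 ∧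
    Module.finrank ℝ (LinearMap.ker (M3 A₁ A₂ γ α ρp np up).mulVecLin) = 1 := by
  have h1 : ρp ^ (γ - 1) = ρp ^ (γ - 2) * ρp := by
    rw [show γ - 1 = (γ - 2) + 1 by ring, Real.rpow_add hρ, Real.rpow_one]
  have h2 : ρp ^ γ = ρp ^ (γ - 2) * ρp ^ 2 := by
    rw [show γ = (γ - 2) + 2 by ring, Real.rpow_add hρ, Real.rpow_two]
    rw [show γ - 2 + 2 - 2 = γ - 2 by ring]
  have h3 : np ^ (α - 1) = np ^ (α - 2) * np := by
    rw [show α - 1 = (α - 2) + 1 by ring, Real.rpow_add hn, Real.rpow_one]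
  have h4 : np ^ α = np ^ (α - 2) * np ^ 2 := by
    rw [show α = (α - 2) + 2 by ring, Real.rpow_add hn, Real.rpow_two]
    rw [show α - 2 + 2 - 2 = α - 2 by ring]
  set a := A₁ * γ * ρp ^ (γ - 2) with ha
  set b := A₂ * α * np ^ (α - 2) with hb
  have hapos : 0 < a := by
    have := Real.rpow_pos_of_pos hρ (γ - 2)
    positivity
  have hbpos : 0 < b := by
    have := Real.rpow_pos_of_pos hn (α - 2)
    positivity
  have hson' : up ^ 2 * (ρp + np) = a * ρp ^ 2 + b * np ^ 2 := by
    rw [hson, h2, h4]; ring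
  have hM : M3 A₁ A₂ γ α ρp np up =
      !![-(a * up), 0, -(a * ρp); 0, -(b * up), -(b * np);
         -(a * ρp), -(b * np), -((ρp + np) * up)] := by
    rw [M3, h1, h3, ha, hb]; ring_nf
  have hune : up ≠ 0 := hu.ne
  -- kernel vector
  have hv : (M3 A₁ A₂ γ α ρp np up) *ᵥ ![ρp, np, -up] = 0 := by
    rw [hM]
    funext i
    fin_cases i <;>
      simp [mulVec, dotProduct, Fin.sum_univ_three] <;> nlinarith [hson']
  have hvne : (![ρp, np, -up] : Fin 3 → ℝ) ≠ 0 := by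
    intro h
    have := congrFun h 0
    simp at this
    exact hρ.ne' this
  refine ⟨?_, ?_, ?_⟩
  · rw [Matrix.posSemidef_iff_dotProduct_mulVec]; constructor
    · rw [hM]
      ext i j
      fin_cases i <;> fin_cases j <;> rfl
    · intro x
      have e0 : star x = x := by simp
      rw [hM]
      simp only [e0, dotProduct, mulVec, Fin.sum_univ_three, Matrix.cons_val', Matrix.cons_val_zero,
        Matrix.cons_val_one, Matrix.head_cons, Matrix.empty_val', Matrix.cons_val_fin_one,
        Matrix.head_fin_const, Matrix.of_apply, Matrix.cons_val_two, Matrix.tail_cons,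
        Matrix.cons_val_succ]
      have hnn : 0 ≤ a * (up * x 0 + ρp * x 2) ^ 2 + b * (up * x 1 + np * x 2) ^ 2 :=
        add_nonneg (mul_nonneg hapos.le (sq_nonneg _)) (mul_nonneg hbpos.le (sq_nonneg _))
      have hkey : (-up) * (x 0 * (-(a * up) * x 0 + 0 * x 1 + -(a * ρp) * x 2) +
          x 1 * (0 * x 0 + -(b * up) * x 1 + -(b * np) * x 2) +
          x 2 * (-(a * ρp) * x 0 + -(b * np) * x 1 + -((ρp + np) * up) * x 2)) =
          a * (up * x 0 + ρp * x 2) ^ 2 + b * (up * x 1 + np * x 2) ^ 2 := by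
        linear_combination (x 2) ^ 2 * hson'
      nlinarith [hkey, hnn, neg_pos.mpr hu]
  · exact (Matrix.exists_mulVec_eq_zero_iff).mp ⟨![ρp, np, -up], hvne, hv⟩
  · have hker : LinearMap.ker (M3 A₁ A₂ γ α ρp np up).mulVecLin
        = Submodule.span ℝ {![ρp, np, -up]} := by
      apply le_antisymm
      · intro x hx
        have hx' : (M3 A₁ A₂ γ α ρp np up) *ᵥ x = 0 := hx
        rw [hM] at hx'
        have e0 := congrFun hx' 0
        have e1 := congrFun hx' 1
        simp [mulVec, dotProduct, Fin.sum_univ_three] at e0 e1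
        have hupne : (-up) ≠ 0 := neg_ne_zero.mpr hune
        have key0 : up * x 0 + ρp * x 2 = 0 := by
          have h : a * (up * x 0 + ρp * x 2) = 0 := by
            first
            | linear_combination e0
            | linear_combination -e0
            | linear_combination -(1:ℝ) * e0
          exact (mul_eq_zero.mp h).resolve_left hapos.ne'
        have key1 : up * x 1 + np * x 2 = 0 := by
          have h : b * (up * x 1 + np * x 2) = 0 := by
            first
            | linear_combination e1
            | linear_combination -e1
            | linear_combination -(1:ℝ) * e1
          exact (mul_eq_zero.mp h).resolve_left hbpos.ne'
        have hx0 : x 0 = ρp * x 2 / (-up) := by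
          rw [eq_div_iff hupne]; linear_combination -key0
        have hx1 : x 1 = np * x 2 / (-up) := by
          rw [eq_div_iff hupne]; linear_combination -key1
        refine Submodule.mem_span_singleton.mpr ⟨x 2 / (-up), ?_⟩
        funext i
        fin_cases i
        all_goals simp only [Pi.smul_apply, smul_eq_mul, Matrix.cons_val_zero,
          Matrix.cons_val_one, Matrix.head_cons, Matrix.cons_val_two, Matrix.tail_cons,
          Fin.isValue, Fin.mk_one, Fin.mk_zero]
        · rw [hx0]; ring
        · rw [hx1]; ring
        · exact div_mul_cancel₀ _ hupne
      · rw [Submodule.span_le]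
        intro y hy
        simp only [Set.mem_singleton_iff] at hy
        subst hy
        exact hv
    rw [hker]
    exact finrank_span_singleton hvne
end

section
/- Let j > 2. There exists a constant C > 0 (depending only on j) such that for every δ with 0 < δ ≤ 1 and every continuously differentiable function ψ : [0,∞) → ℝ with ∫₀^∞ ψ'(x)² dx < ∞, one has ∫₀^∞ (δ^j/(1+δx)^j) ψ(x)² dx ≤ C δ^{j−2} ( ψ(0)² + ∫₀^∞ ψ'(x)² dx ). -/
open Real MeasureTheory Set

/-- Cauchy–Schwarz for an interval integral of a continuous function. -/
lemma cs_aux (f : ℝ → ℝ) (hf : Continuous f) (x : ℝ) (hx : 0 < x) :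
    (∫ t in (0:ℝ)..x, f t) ^ 2 ≤ x * ∫ t in Ioc (0:ℝ) x, f t ^ 2 := by
  set μ := volume.restrict (Ioc (0:ℝ) x) with hμ
  have hpq : (2:ℝ).HolderConjugate 2 := by constructor <;> norm_num
  have h2 : ENNReal.ofReal (2:ℝ) = 2 := by norm_num
  have hmf : MemLp (fun t => |f t|) (ENNReal.ofReal 2) μ := by
    rw [h2]
    refine (memLp_two_iff_integrable_sq ?_).mpr ?_
    · exact hf.abs.aestronglyMeasurable
    · have : Continuous fun t => f t ^ 2 := by continuity
      simp only [sq_abs]; exact (this.integrableOn_Ioc : IntegrableOn _ (Ioc 0 x) volume)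
  have hmg : MemLp (fun _ : ℝ => (1:ℝ)) (ENNReal.ofReal 2) μ := memLp_const 1
  have hH := integral_mul_le_Lp_mul_Lq_of_nonneg (μ := μ) hpq
      (Filter.Eventually.of_forall fun t => abs_nonneg (f t))
      (Filter.Eventually.of_forall fun _ => zero_le_one) hmf hmg
  simp only [mul_one, Real.one_rpow] at hH
  have hA0 : 0 ≤ ∫ t, |f t| ^ (2:ℝ) ∂μ :=
    integral_nonneg fun t => Real.rpow_nonneg (abs_nonneg _) _
  have hconst : ∫ _t, (1:ℝ) ∂μ = x := by
    simp [hμ, Real.volume_Ioc, ENNReal.toReal_ofReal hx.le, hx.le]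
  have habs : |∫ t, f t ∂μ| ≤ ∫ t, |f t| ∂μ := by
    simpa [Real.norm_eq_abs] using norm_integral_le_integral_norm (μ := μ) f
  have h1 : (∫ t, f t ∂μ) ^ 2 ≤ (∫ t, |f t| ∂μ) ^ 2 := by
    have := abs_le.mp habs
    exact sq_le_sq' (by linarith [this.1]) this.2
  have h2' : (∫ t, |f t| ∂μ) ^ 2 ≤
      ((∫ t, |f t| ^ (2:ℝ) ∂μ) ^ (1/2:ℝ) * (∫ _t, (1:ℝ) ∂μ) ^ (1/2:ℝ)) ^ 2 :=
    pow_le_pow_left₀ (integral_nonneg fun t => abs_nonneg _) hH 2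
  have hsq : ((∫ t, |f t| ^ (2:ℝ) ∂μ) ^ (1/2:ℝ) * (∫ _t, (1:ℝ) ∂μ) ^ (1/2:ℝ)) ^ 2
      = (∫ t, |f t| ^ (2:ℝ) ∂μ) * x := by
    rw [hconst, ← Real.sqrt_eq_rpow, ← Real.sqrt_eq_rpow, mul_pow,
      Real.sq_sqrt hA0, Real.sq_sqrt hx.le]
  have hpow : ∫ t, |f t| ^ (2:ℝ) ∂μ = ∫ t in Ioc (0:ℝ) x, f t ^ 2 := by
    refine integral_congr_ae (Filter.Eventually.of_forall fun t => ?_)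
    show |f t| ^ (2:ℝ) = f t ^ 2
    rw [show |f t| ^ (2:ℝ) = |f t| ^ ((2:ℕ):ℝ) by norm_num, Real.rpow_natCast, sq_abs]
  rw [intervalIntegral.integral_of_le hx.le]
  calc (∫ t in Ioc (0:ℝ) x, f t) ^ 2 ≤ (∫ t, |f t| ∂μ) ^ 2 := h1
    _ ≤ _ := h2'
    _ = (∫ t, |f t| ^ (2:ℝ) ∂μ) * x := hsq
    _ = x * ∫ t in Ioc (0:ℝ) x, f t ^ 2 := by rw [hpow, mul_comm]

lemma psi_sq_le (ψ : ℝ → ℝ) (hψ : ContDiff ℝ 1 ψ)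
    (hi : IntegrableOn (fun x => deriv ψ x ^ 2) (Ioi 0)) (x : ℝ) (hx : 0 < x) :
    ψ x ^ 2 ≤ 2 * ψ 0 ^ 2 + 2 * x * ∫ t in Ioi (0:ℝ), deriv ψ t ^ 2 := by
  have hd : Continuous (deriv ψ) := hψ.continuous_deriv le_rfl
  have hft : ∫ t in (0:ℝ)..x, deriv ψ t = ψ x - ψ 0 :=
    intervalIntegral.integral_deriv_eq_sub
      (fun t _ => (hψ.differentiable one_ne_zero).differentiableAt)
      (hd.intervalIntegrable 0 x)
  have hcs := cs_aux (deriv ψ) hd x hx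
  rw [hft] at hcs
  have hmono : ∫ t in Ioc (0:ℝ) x, deriv ψ t ^ 2 ≤ ∫ t in Ioi (0:ℝ), deriv ψ t ^ 2 :=
    setIntegral_mono_set hi (Filter.Eventually.of_forall fun t => sq_nonneg _)
      (HasSubset.Subset.eventuallyLE Ioc_subset_Ioi_self)
  nlinarith [sq_nonneg (ψ x - 2 * ψ 0), mul_le_mul_of_nonneg_left hmono hx.le]

/-- weighted Poincaré-type inequality with algebraic weight
(Lemma 3.2, part 2). -/
theorem stmt9 (j : ℝ) (hj : 2 < j) :
    ∃ C > 0, ∀ δ : ℝ, 0 < δ → δ ≤ 1 → ∀ ψ : ℝ → ℝ, ContDiff ℝ 1 ψ →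
      IntegrableOn (fun x => deriv ψ x ^ 2) (Ioi 0) →
      ∫ x in Ioi (0:ℝ), δ ^ j / (1 + δ * x) ^ j * ψ x ^ 2 ≤
        C * δ ^ (j - 2) * (ψ 0 ^ 2 + ∫ x in Ioi (0:ℝ), deriv ψ x ^ 2) := by
  set K : ℝ := ∫ u in Ioi (0:ℝ), (1 + u) ^ (1 - j) with hK
  have hK0 : 0 ≤ K := setIntegral_nonneg measurableSet_Ioi fun u hu =>
    Real.rpow_nonneg (by simp only [mem_Ioi] at hu; linarith) _
  -- continuity of the base integrand
  have hcont : ContinuousOn (fun u : ℝ => (1 + u) ^ (1 - j)) (Ici (-1/2 : ℝ)) := by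
    intro u hu
    have h1u : (1:ℝ) + u ≠ 0 := by simp only [mem_Ici] at hu; intro h; linarith [h]
    exact ((Real.continuousAt_rpow_const (1 + u) (1 - j) (Or.inl h1u)).comp
      ((continuous_const.add continuous_id).continuousAt)).continuousWithinAt
  -- integrability of the base integrand on (0, ∞)
  have hbase : IntegrableOn (fun u : ℝ => (1 + u) ^ (1 - j)) (Ioi 0) := by
    have hunion : Ioc (0:ℝ) 1 ∪ Ioi 1 = Ioi 0 := Ioc_union_Ioi_eq_Ioi zero_le_one
    rw [← hunion]
    refine IntegrableOn.union ?_ ?_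
    · exact ((hcont.mono (fun y hy => by
        simp only [mem_Icc] at hy; simp only [mem_Ici]; linarith [hy.1])).integrableOn_compact
        (isCompact_Icc (a := (0:ℝ)) (b := 1))).mono_set Ioc_subset_Icc_self
    · refine Integrable.mono (integrableOn_Ioi_rpow_of_lt (by linarith : 1 - j < -1) one_pos)
        ((hcont.mono (fun y hy => by
          simp only [mem_Ioi] at hy; simp only [mem_Ici]; linarith)).aestronglyMeasurable
          measurableSet_Ioi) ?_
      refine (ae_restrict_iff' measurableSet_Ioi).mpr (Filter.Eventually.of_forall fun y hy => ?_)
      simp only [mem_Ioi] at hy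
      have hy0 : (0:ℝ) < y := lt_trans one_pos hy
      rw [Real.norm_eq_abs, Real.norm_eq_abs,
        abs_of_nonneg (Real.rpow_nonneg (by linarith) _),
        abs_of_nonneg (Real.rpow_nonneg hy0.le _)]
      exact Real.rpow_le_rpow_of_nonpos hy0 (by linarith) (by linarith)
  refine ⟨2 * K + 1, by positivity, fun δ hδ hδ1 ψ hψ hi => ?_⟩
  set E : ℝ := ∫ t in Ioi (0:ℝ), deriv ψ t ^ 2 with hE
  have hE0 : 0 ≤ E := setIntegral_nonneg measurableSet_Ioi fun t _ => sq_nonneg _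
  -- integrability of the majorant
  have hInt : IntegrableOn (fun x : ℝ => (1 + δ * x) ^ (1 - j)) (Ioi 0) := by
    have := (integrableOn_Ioi_comp_mul_left_iff (fun u : ℝ => (1 + u) ^ (1 - j)) 0 hδ).mpr
      (by simpa using hbase)
    simpa using this
  have hIntB : IntegrableOn
      (fun x : ℝ => 2 * (ψ 0 ^ 2 + E) * δ ^ (j - 1) * (1 + δ * x) ^ (1 - j)) (Ioi 0) :=
    hInt.const_mul _
  -- pointwise bound
  have hptwise : ∀ x ∈ Ioi (0:ℝ), δ ^ j / (1 + δ * x) ^ j * ψ x ^ 2 ≤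
      2 * (ψ 0 ^ 2 + E) * δ ^ (j - 1) * (1 + δ * x) ^ (1 - j) := by
    intro x hx
    simp only [mem_Ioi] at hx
    have h1x : (0:ℝ) < 1 + δ * x := by nlinarith
    have hkey := psi_sq_le ψ hψ hi x hx
    rw [← hE] at hkey
    have hδj : δ ^ j = δ ^ (j - 1) * δ := by
      rw [show j = j - 1 + 1 by ring, Real.rpow_add_one hδ.ne']; ring_nf
    have hPj : (1 + δ * x) ^ j = (1 + δ * x) ^ (j - 1) * (1 + δ * x) := by
      rw [show j = j - 1 + 1 by ring, Real.rpow_add_one h1x.ne']; ring_nf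
    have h1mj : (1 + δ * x) ^ (1 - j) = ((1 + δ * x) ^ (j - 1))⁻¹ := by
      rw [show (1:ℝ) - j = -(j - 1) by ring, Real.rpow_neg h1x.le]
    have main : δ * ψ x ^ 2 ≤ 2 * (ψ 0 ^ 2 + E) * (1 + δ * x) := by
      nlinarith [mul_le_mul_of_nonneg_left hkey hδ.le, sq_nonneg (ψ 0),
        mul_nonneg (mul_nonneg hδ.le hx.le) (sq_nonneg (ψ 0)),
        mul_nonneg (mul_nonneg hδ.le hx.le) hE0]
    have hDnn : 0 ≤ δ ^ (j - 1) / (1 + δ * x) ^ (j - 1) :=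
      div_nonneg (Real.rpow_nonneg hδ.le _) (Real.rpow_nonneg h1x.le _)
    calc δ ^ j / (1 + δ * x) ^ j * ψ x ^ 2
        = (δ ^ (j - 1) / (1 + δ * x) ^ (j - 1)) * (δ * ψ x ^ 2 / (1 + δ * x)) := by
          have hPne : (1 + δ * x) ^ (j - 1) ≠ 0 := (Real.rpow_pos_of_pos h1x _).ne'
          rw [hδj, hPj]; field_simp
      _ ≤ (δ ^ (j - 1) / (1 + δ * x) ^ (j - 1)) * (2 * (ψ 0 ^ 2 + E)) := by
          refine mul_le_mul_of_nonneg_left ?_ hDnn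
          rw [div_le_iff₀ h1x]; exact main
      _ = 2 * (ψ 0 ^ 2 + E) * δ ^ (j - 1) * (1 + δ * x) ^ (1 - j) := by
          rw [h1mj]; ring
  have hle : ∫ x in Ioi (0:ℝ), δ ^ j / (1 + δ * x) ^ j * ψ x ^ 2 ≤
      ∫ x in Ioi (0:ℝ), 2 * (ψ 0 ^ 2 + E) * δ ^ (j - 1) * (1 + δ * x) ^ (1 - j) := by
    refine integral_mono_of_nonneg ?_ hIntB ?_
    · refine (ae_restrict_iff' measurableSet_Ioi).mpr
        (Filter.Eventually.of_forall fun x hx => ?_)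
      simp only [mem_Ioi] at hx
      have h1x : (0:ℝ) < 1 + δ * x := by nlinarith
      have : 0 ≤ δ ^ j / (1 + δ * x) ^ j :=
        div_nonneg (Real.rpow_nonneg hδ.le _) (Real.rpow_nonneg h1x.le _)
      positivity
    · exact (ae_restrict_iff' measurableSet_Ioi).mpr
        (Filter.Eventually.of_forall hptwise)
  have hval : ∫ x in Ioi (0:ℝ), 2 * (ψ 0 ^ 2 + E) * δ ^ (j - 1) * (1 + δ * x) ^ (1 - j)
      = 2 * (ψ 0 ^ 2 + E) * δ ^ (j - 1) * (δ⁻¹ * K) := by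
    rw [MeasureTheory.integral_const_mul]
    congr 1
    have := integral_comp_mul_left_Ioi (fun u : ℝ => (1 + u) ^ (1 - j)) 0 hδ
    simpa [smul_eq_mul] using this
  have hpow : δ ^ (j - 1) * δ⁻¹ = δ ^ (j - 2) := by
    rw [← Real.rpow_neg_one δ, ← Real.rpow_add hδ]
    congr 1; ring
  rw [hval] at hle
  refine hle.trans ?_
  have h1 : 2 * (ψ 0 ^ 2 + E) * δ ^ (j - 1) * (δ⁻¹ * K)
      = 2 * K * δ ^ (j - 2) * (ψ 0 ^ 2 + E) := by
    rw [show 2 * (ψ 0 ^ 2 + E) * δ ^ (j - 1) * (δ⁻¹ * K)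
        = 2 * K * (δ ^ (j - 1) * δ⁻¹) * (ψ 0 ^ 2 + E) by ring, hpow]
  rw [h1]
  have hδp : (0:ℝ) < δ ^ (j - 2) := Real.rpow_pos_of_pos hδ _
  nlinarith [mul_nonneg hδp.le (add_nonneg (sq_nonneg (ψ 0)) hE0)]
end

section
/- (Weighted cubic interpolation inequality.) Let ν ≥ 1 and let 0 < c₁ ≤ C₃ be constants. There exist constants ε > 0 and C > 0, depending only on ν, c₁, C₃, with the following property: for every δ > 0 and every continuously differentiable, nonincreasing function σ : [0,∞) → (0,∞) satisfying c₁δ/(1+δx) ≤ σ(x) ≤ C₃δ/(1+δx) and |σ'(x)| ≤ C₃δ²/(1+δx)² for all x ≥ 0, and with σ(0) ≤ ε, every continuously differentiable φ : [0,∞) → ℝ for which ∫₀^∞ σ^{−1}φ² dx, ∫₀^∞ σ^{−ν}(φ')² dx and ∫₀^∞ σ^{−(ν−2)}φ² dx are all finite satisfies ∫₀^∞ σ^{−(ν−1)/2}|φ|³ dx ≤ C (∫₀^∞ σ^{−1}φ² dx)^{1/2} · ( σ(0)φ(0)² + ∫₀^∞ σ^{−ν}(φ')² dx + ∫₀^∞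 σ^{−(ν−2)}φ² dx ). -/
open Real MeasureTheory Set

set_option maxHeartbeats 1000000 in
/-- weighted cubic interpolation inequality (Lemma 4.5). -/
theorem stmt11 (ν c₁ C₃ : ℝ) (hν : 1 ≤ ν) (hc₁ : 0 < c₁) (hc₁C₃ : c₁ ≤ C₃) :
    ∃ ε > 0, ∃ C > 0, ∀ δ : ℝ, 0 < δ → ∀ σ : ℝ → ℝ,
      ContDiff ℝ 1 σ → AntitoneOn σ (Ici 0) → (∀ x ≥ (0:ℝ), 0 < σ x) →
      (∀ x ≥ (0:ℝ), c₁ * δ / (1 + δ * x) ≤ σ x ∧ σ x ≤ C₃ * δ / (1 + δ * x)) →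
      (∀ x ≥ (0:ℝ), |deriv σ x| ≤ C₃ * δ ^ 2 / (1 + δ * x) ^ 2) →
      σ 0 ≤ ε →
      ∀ φ : ℝ → ℝ, ContDiff ℝ 1 φ →
        IntegrableOn (fun x => σ x ^ (-(1:ℝ)) * φ x ^ 2) (Ioi 0) →
        IntegrableOn (fun x => σ x ^ (-ν) * deriv φ x ^ 2) (Ioi 0) →
        IntegrableOn (fun x => σ x ^ (-(ν - 2)) * φ x ^ 2) (Ioi 0) →
        ∫ x in Ioi (0:ℝ), σ x ^ (-((ν - 1) / 2)) * |φ x| ^ 3 ≤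
          C * Real.sqrt (∫ x in Ioi (0:ℝ), σ x ^ (-(1:ℝ)) * φ x ^ 2) *
            (σ 0 * φ 0 ^ 2 + (∫ x in Ioi (0:ℝ), σ x ^ (-ν) * deriv φ x ^ 2)
              + ∫ x in Ioi (0:ℝ), σ x ^ (-(ν - 2)) * φ x ^ 2) := by
  refine ⟨1, one_pos, 1, one_pos, ?_⟩
  intro δ hδ σ hσC hσmono hσpos _hσbd _hσ'bd hσ0 φ hφC hA hD hE
  have hσc : Continuous σ := hσC.continuous
  have hφc : Continuous φ := hφC.continuous
  have hφ'c : Continuous (deriv φ) := hφC.continuous_deriv le_rfl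
  have hσ0pos : 0 < σ 0 := hσpos 0 le_rfl
  have hσle : ∀ x : ℝ, 0 ≤ x → σ x ≤ σ 0 := fun x hx =>
    hσmono self_mem_Ici (mem_Ici.mpr hx) hx
  have hσle1 : ∀ x : ℝ, 0 ≤ x → σ x ≤ 1 := fun x hx => (hσle x hx).trans hσ0
  set A := ∫ x in Ioi (0:ℝ), σ x ^ (-(1:ℝ)) * φ x ^ 2 with hA_def
  set D := ∫ x in Ioi (0:ℝ), σ x ^ (-ν) * deriv φ x ^ 2 with hD_def
  set E := ∫ x in Ioi (0:ℝ), σ x ^ (-(ν - 2)) * φ x ^ 2 with hE_def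
  have hAnn : 0 ≤ A := setIntegral_nonneg measurableSet_Ioi fun x hx =>
    mul_nonneg (Real.rpow_nonneg (hσpos x (le_of_lt hx)).le _) (sq_nonneg _)
  have hDnn : 0 ≤ D := setIntegral_nonneg measurableSet_Ioi fun x hx =>
    mul_nonneg (Real.rpow_nonneg (hσpos x (le_of_lt hx)).le _) (sq_nonneg _)
  have hEnn : 0 ≤ E := setIntegral_nonneg measurableSet_Ioi fun x hx =>
    mul_nonneg (Real.rpow_nonneg (hσpos x (le_of_lt hx)).le _) (sq_nonneg _)
  have hbnn : 0 ≤ σ 0 * φ 0 ^ 2 := mul_nonneg hσ0pos.le (sq_nonneg _)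
  -- pointwise AM-GM : 2|φ| |φ'| ≤ σ^{-ν} φ'^2 + σ^{-(ν-2)} φ^2 on Ioi 0
  have hpt : ∀ x ∈ Ioi (0:ℝ), 2 * (|φ x| * |deriv φ x|) ≤
      σ x ^ (-ν) * deriv φ x ^ 2 + σ x ^ (-(ν - 2)) * φ x ^ 2 := by
    intro x hx
    have hs : 0 < σ x := hσpos x (le_of_lt hx)
    set p := σ x ^ (-(ν / 2)) with hp
    set q := σ x ^ (ν / 2) with hq
    have hpq : p * q = 1 := by
      rw [hp, hq, ← Real.rpow_add hs]; norm_num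
    have hp2 : p * p = σ x ^ (-ν) := by
      rw [hp, ← Real.rpow_add hs]; congr 1; ring
    have hq2 : q * q = σ x ^ ν := by
      rw [hq, ← Real.rpow_add hs]; congr 1; ring
    have hqle : σ x ^ ν * φ x ^ 2 ≤ σ x ^ (-(ν - 2)) * φ x ^ 2 :=
      mul_le_mul_of_nonneg_right
        (Real.rpow_le_rpow_of_exponent_ge hs (hσle1 x (le_of_lt hx)) (by linarith))
        (sq_nonneg _)
    have e1 : (p * |deriv φ x|) ^ 2 = σ x ^ (-ν) * deriv φ x ^ 2 := by
      rw [mul_pow, sq_abs, ← hp2]; ring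
    have e2 : (q * |φ x|) ^ 2 = σ x ^ ν * φ x ^ 2 := by
      rw [mul_pow, sq_abs, ← hq2]; ring
    have e3 : (p * |deriv φ x|) * (q * |φ x|) = |deriv φ x| * |φ x| := by
      rw [mul_mul_mul_comm, hpq, one_mul]
    nlinarith [sq_nonneg (p * |deriv φ x| - q * |φ x|), e1, e2, e3, hqle]
  have hInt2 : IntegrableOn
      (fun x => σ x ^ (-ν) * deriv φ x ^ 2 + σ x ^ (-(ν - 2)) * φ x ^ 2) (Ioi 0) := hD.add hE
  have hIint : IntegrableOn (fun x => |φ x| * |deriv φ x|) (Ioi 0) := by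
    refine Integrable.mono' hInt2 ((hφc.abs.mul hφ'c.abs)).aestronglyMeasurable ?_
    refine (ae_restrict_iff' measurableSet_Ioi).2 (ae_of_all _ fun x hx => ?_)
    have h := hpt x hx
    have h0 : 0 ≤ |φ x| * |deriv φ x| := mul_nonneg (abs_nonneg _) (abs_nonneg _)
    rw [Real.norm_eq_abs, abs_of_nonneg h0]
    linarith
  set I := ∫ x in Ioi (0:ℝ), |φ x| * |deriv φ x| with hI_def
  have h2I : 2 * I ≤ D + E := by
    have h1 : ∫ x in Ioi (0:ℝ), 2 * (|φ x| * |deriv φ x|) ≤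
        ∫ x in Ioi (0:ℝ), (σ x ^ (-ν) * deriv φ x ^ 2 + σ x ^ (-(ν - 2)) * φ x ^ 2) :=
      setIntegral_mono_on (hIint.const_mul 2) hInt2 measurableSet_Ioi hpt
    rw [integral_const_mul, integral_add hD hE] at h1
    exact h1
  -- sup bound : φ x ^ 2 ≤ D + E for x ≥ 0
  have hφsq : ∀ x : ℝ, 0 ≤ x → φ x ^ 2 ≤ D + E := by
    intro x hx
    refine le_of_forall_pos_le_add fun η hη => ?_
    obtain ⟨y, hy1, hy2⟩ : ∃ y, max x 1 ≤ y ∧ σ y ^ (-(1:ℝ)) * φ y ^ 2 < η / σ 0 := by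
      by_contra hcon
      push_neg at hcon
      have hsub : Ioi (max x 1) ⊆ Ioi (0:ℝ) :=
        Ioi_subset_Ioi (le_trans zero_le_one (le_max_right x 1))
      have h1 : IntegrableOn (fun _ : ℝ => η / σ 0) (Ioi (max x 1)) := by
        refine Integrable.mono' (hA.mono_set hsub) aestronglyMeasurable_const ?_
        refine (ae_restrict_iff' measurableSet_Ioi).2 (ae_of_all _ fun y hy => ?_)
        rw [Real.norm_eq_abs, abs_of_nonneg (by positivity)]
        exact hcon y (le_of_lt hy)
      rw [integrableOn_const_iff] at h1
      rcases h1 with h | h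
      · have : 0 < η / σ 0 := by positivity
        exact absurd (enorm_eq_zero.1 h) this.ne'
      · rw [Real.volume_Ioi] at h
        exact absurd h (by simp)
    have hy0 : (0:ℝ) ≤ y := le_trans (le_trans zero_le_one (le_max_right x 1)) hy1
    have hxy : x ≤ y := le_trans (le_max_left x 1) hy1
    have hderiv : ∀ t ∈ uIcc x y, HasDerivAt (fun t => φ t ^ 2) (2 * φ t * deriv φ t) t := by
      intro t _
      have h := ((hφC.differentiable one_ne_zero) t).hasDerivAt
      simpa using h.fun_pow 2
    have hFTC : ∫ t in x..y, 2 * φ t * deriv φ t = φ y ^ 2 - φ x ^ 2 :=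
      intervalIntegral.integral_eq_sub_of_hasDerivAt hderiv
        (Continuous.intervalIntegrable (by continuity) x y)
    have habs : |∫ t in x..y, 2 * φ t * deriv φ t| ≤ ∫ t in x..y, |2 * φ t * deriv φ t| :=
      intervalIntegral.abs_integral_le_integral_abs hxy
    have hconv : ∀ t : ℝ, |2 * φ t * deriv φ t| = 2 * (|φ t| * |deriv φ t|) := by
      intro t
      rw [abs_mul, abs_mul, abs_two]
      ring
    have hset : ∫ t in x..y, |2 * φ t * deriv φ t| = ∫ t in Ioc x y, 2 * (|φ t| * |deriv φ t|) := by
      rw [intervalIntegral.integral_of_le hxy]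
      exact setIntegral_congr_fun measurableSet_Ioc fun t _ => hconv t
    have hmono : ∫ t in Ioc x y, 2 * (|φ t| * |deriv φ t|) ≤
        ∫ t in Ioi (0:ℝ), 2 * (|φ t| * |deriv φ t|) := by
      refine setIntegral_mono_set (hIint.const_mul 2) ?_ ?_
      · exact (ae_restrict_iff' measurableSet_Ioi).2 (ae_of_all _ fun t _ => by positivity)
      · exact HasSubset.Subset.eventuallyLE fun t ht => lt_of_le_of_lt hx ht.1
    have hI2 : ∫ t in Ioi (0:ℝ), 2 * (|φ t| * |deriv φ t|) = 2 * I := integral_const_mul 2 _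
    have hφy : φ y ^ 2 < η := by
      have hsy : 0 < σ y := hσpos y hy0
      have hid : φ y ^ 2 = σ y * (σ y ^ (-(1:ℝ)) * φ y ^ 2) := by
        rw [Real.rpow_neg_one]
        field_simp
      have h1 : σ y * (σ y ^ (-(1:ℝ)) * φ y ^ 2) ≤ σ 0 * (σ y ^ (-(1:ℝ)) * φ y ^ 2) :=
        mul_le_mul_of_nonneg_right (hσle y hy0)
          (mul_nonneg (Real.rpow_nonneg hsy.le _) (sq_nonneg _))
      have h2 : σ 0 * (σ y ^ (-(1:ℝ)) * φ y ^ 2) < σ 0 * (η / σ 0) :=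
        mul_lt_mul_of_pos_left hy2 hσ0pos
      have h3 : σ 0 * (η / σ 0) = η := by field_simp
      calc φ y ^ 2 = σ y * (σ y ^ (-(1:ℝ)) * φ y ^ 2) := hid
        _ ≤ σ 0 * (σ y ^ (-(1:ℝ)) * φ y ^ 2) := h1
        _ < η := by rw [← h3]; exact h2
    have hfin : φ x ^ 2 ≤ φ y ^ 2 + 2 * I := by
      have := hFTC
      have h4 : φ x ^ 2 = φ y ^ 2 - ∫ t in x..y, 2 * φ t * deriv φ t := by linarith
      rw [h4]
      have h5 : ∫ t in x..y, 2 * φ t * deriv φ t ≥ -(2 * I) := by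
        have := neg_abs_le (∫ t in x..y, 2 * φ t * deriv φ t)
        have h6 : |∫ t in x..y, 2 * φ t * deriv φ t| ≤ 2 * I := by
          calc |∫ t in x..y, 2 * φ t * deriv φ t| ≤ ∫ t in x..y, |2 * φ t * deriv φ t| := habs
            _ = ∫ t in Ioc x y, 2 * (|φ t| * |deriv φ t|) := hset
            _ ≤ ∫ t in Ioi (0:ℝ), 2 * (|φ t| * |deriv φ t|) := hmono
            _ = 2 * I := hI2
        linarith
      linarith
    linarith
  -- the quartic integral
  have hFptw : ∀ x ∈ Ioi (0:ℝ), σ x ^ (-(ν - 2)) * φ x ^ 4 ≤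
      (D + E) * (σ x ^ (-(ν - 2)) * φ x ^ 2) := by
    intro x hx
    have hs : 0 < σ x := hσpos x (le_of_lt hx)
    have h1 : σ x ^ (-(ν - 2)) * φ x ^ 4 = (σ x ^ (-(ν - 2)) * φ x ^ 2) * φ x ^ 2 := by ring
    rw [h1]
    calc (σ x ^ (-(ν - 2)) * φ x ^ 2) * φ x ^ 2 ≤ (σ x ^ (-(ν - 2)) * φ x ^ 2) * (D + E) :=
        mul_le_mul_of_nonneg_left (hφsq x (le_of_lt hx))
          (mul_nonneg (Real.rpow_nonneg hs.le _) (sq_nonneg _))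
      _ = (D + E) * (σ x ^ (-(ν - 2)) * φ x ^ 2) := by ring
  have hFint : IntegrableOn (fun x => σ x ^ (-(ν - 2)) * φ x ^ 4) (Ioi 0) := by
    refine Integrable.mono' (hE.const_mul (D + E)) ?_ ?_
    · refine ContinuousOn.aestronglyMeasurable ?_ measurableSet_Ioi
      exact (hσc.continuousOn.rpow_const fun x hx =>
        Or.inl (hσpos x (le_of_lt hx)).ne').mul (hφc.pow 4).continuousOn
    · refine (ae_restrict_iff' measurableSet_Ioi).2 (ae_of_all _ fun x hx => ?_)
      have hs : 0 < σ x := hσpos x (le_of_lt hx)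
      rw [Real.norm_eq_abs, abs_of_nonneg (by positivity)]
      exact hFptw x hx
  set F := ∫ x in Ioi (0:ℝ), σ x ^ (-(ν - 2)) * φ x ^ 4 with hF_def
  have hFnn : 0 ≤ F := setIntegral_nonneg measurableSet_Ioi fun x hx => by
    have hs : 0 < σ x := hσpos x (le_of_lt hx)
    positivity
  have hFle : F ≤ (D + E) * E := by
    have h1 := setIntegral_mono_on hFint (hE.const_mul (D + E)) measurableSet_Ioi hFptw
    rwa [integral_const_mul] at h1
  -- pointwise Young inequality for the cubic integrand
  have hptw : ∀ l : ℝ, 0 < l → ∀ x ∈ Ioi (0:ℝ),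
      σ x ^ (-((ν - 1) / 2)) * |φ x| ^ 3 ≤
        l / 2 * (σ x ^ (-(1:ℝ)) * φ x ^ 2) + 1 / (2 * l) * (σ x ^ (-(ν - 2)) * φ x ^ 4) := by
    intro l hl x hx
    have hs : 0 < σ x := hσpos x (le_of_lt hx)
    set a := σ x ^ (-(1 / 2) : ℝ) * |φ x| with ha
    set b := σ x ^ (-((ν - 2) / 2)) * φ x ^ 2 with hb
    have e1 : σ x ^ (-((ν - 1) / 2)) * |φ x| ^ 3 = a * b := by
      have h3 : |φ x| ^ 3 = |φ x| * φ x ^ 2 := by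
        rw [pow_succ', sq_abs]
      have hadd : σ x ^ (-((ν - 1) / 2)) = σ x ^ (-(1 / 2) : ℝ) * σ x ^ (-((ν - 2) / 2)) := by
        rw [← Real.rpow_add hs]; congr 1; ring
      rw [hadd, h3, ha, hb]; ring
    have e2 : a * a = σ x ^ (-(1:ℝ)) * φ x ^ 2 := by
      have h1 : a * a = (σ x ^ (-(1 / 2) : ℝ) * σ x ^ (-(1 / 2) : ℝ)) * (|φ x| * |φ x|) := by
        rw [ha]; ring
      rw [h1, ← Real.rpow_add hs, abs_mul_abs_self,
        show (-(1 / 2) + -(1 / 2) : ℝ) = -1 by norm_num]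
      ring
    have e3 : b * b = σ x ^ (-(ν - 2)) * φ x ^ 4 := by
      have h1 : b * b = (σ x ^ (-((ν - 2) / 2)) * σ x ^ (-((ν - 2) / 2))) * (φ x ^ 2 * φ x ^ 2) := by
        rw [hb]; ring
      rw [h1, ← Real.rpow_add hs, show (-((ν - 2) / 2) + -((ν - 2) / 2)) = -(ν - 2) by ring]
      ring
    rw [e1, ← e2, ← e3]
    have h1 : 2 * l * (a * b) ≤ l * l * (a * a) + b * b := by
      nlinarith [sq_nonneg (l * a - b)]
    have h2l : 0 < 2 * l := by linarith
    calc a * b = (2 * l * (a * b)) / (2 * l) := by field_simp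
      _ ≤ (l * l * (a * a) + b * b) / (2 * l) := by gcongr
      _ = l / 2 * (a * a) + 1 / (2 * l) * (b * b) := by field_simp
  have hLint : IntegrableOn (fun x => σ x ^ (-((ν - 1) / 2)) * |φ x| ^ 3) (Ioi 0) := by
    refine Integrable.mono' ((hA.const_mul (1 / 2)).add (hFint.const_mul (1 / (2 * 1)))) ?_ ?_
    · refine ContinuousOn.aestronglyMeasurable ?_ measurableSet_Ioi
      exact (hσc.continuousOn.rpow_const fun x hx =>
        Or.inl (hσpos x (le_of_lt hx)).ne').mul ((hφc.abs.pow 3).continuousOn)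
    · refine (ae_restrict_iff' measurableSet_Ioi).2 (ae_of_all _ fun x hx => ?_)
      have hs : 0 < σ x := hσpos x (le_of_lt hx)
      rw [Real.norm_eq_abs, abs_of_nonneg (by positivity)]
      exact hptw 1 one_pos x hx
  set L := ∫ x in Ioi (0:ℝ), σ x ^ (-((ν - 1) / 2)) * |φ x| ^ 3 with hL_def
  have hLle : ∀ l : ℝ, 0 < l → L ≤ l / 2 * A + 1 / (2 * l) * F := by
    intro l hl
    have hsum : IntegrableOn (fun x => l / 2 * (σ x ^ (-(1:ℝ)) * φ x ^ 2)
        + 1 / (2 * l) * (σ x ^ (-(ν - 2)) * φ x ^ 4)) (Ioi 0) :=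
      (hA.const_mul (l / 2)).add (hFint.const_mul (1 / (2 * l)))
    have h1 := setIntegral_mono_on hLint hsum measurableSet_Ioi (hptw l hl)
    rwa [integral_add (hA.const_mul (l / 2)) (hFint.const_mul (1 / (2 * l))), integral_const_mul,
      integral_const_mul] at h1
  -- degenerate cases
  rcases eq_or_lt_of_le hAnn with hA0 | hApos
  · -- A = 0 : φ vanishes a.e.
    have hae : (fun x => σ x ^ (-(1:ℝ)) * φ x ^ 2) =ᵐ[volume.restrict (Ioi 0)] 0 := by
      refine (integral_eq_zero_iff_of_nonneg_ae ?_ hA).1 hA0.symm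
      refine (ae_restrict_iff' measurableSet_Ioi).2 (ae_of_all _ fun x hx => ?_)
      have hs : 0 < σ x := hσpos x (le_of_lt hx)
      positivity
    have hL0 : L = 0 := by
      rw [hL_def]
      refine setIntegral_eq_zero_of_ae_eq_zero ?_
      filter_upwards [(ae_restrict_iff' measurableSet_Ioi).1 hae] with x hx hmem
      have hs : 0 < σ x := hσpos x (le_of_lt hmem)
      have h1 : σ x ^ (-(1:ℝ)) * φ x ^ 2 = 0 := hx hmem
      have h2 : φ x = 0 := by
        have hp : (0:ℝ) < σ x ^ (-(1:ℝ)) := Real.rpow_pos_of_pos hs _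
        have := mul_eq_zero.1 h1
        rcases this with h | h
        · exact absurd h hp.ne'
        · exact pow_eq_zero_iff (by norm_num) |>.1 h
      simp [h2]
    rw [hL0, ← hA0]
    simp
  · rcases eq_or_lt_of_le hEnn with hE0 | hEpos
    · -- E = 0 : φ vanishes a.e.
      have hae : (fun x => σ x ^ (-(ν - 2)) * φ x ^ 2) =ᵐ[volume.restrict (Ioi 0)] 0 := by
        refine (integral_eq_zero_iff_of_nonneg_ae ?_ hE).1 hE0.symm
        refine (ae_restrict_iff' measurableSet_Ioi).2 (ae_of_all _ fun x hx => ?_)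
        have hs : 0 < σ x := hσpos x (le_of_lt hx)
        positivity
      have hL0 : L = 0 := by
        rw [hL_def]
        refine setIntegral_eq_zero_of_ae_eq_zero ?_
        filter_upwards [(ae_restrict_iff' measurableSet_Ioi).1 hae] with x hx hmem
        have hs : 0 < σ x := hσpos x (le_of_lt hmem)
        have h1 : σ x ^ (-(ν - 2)) * φ x ^ 2 = 0 := hx hmem
        have h2 : φ x = 0 := by
          have hp : (0:ℝ) < σ x ^ (-(ν - 2)) := Real.rpow_pos_of_pos hs _
          rcases mul_eq_zero.1 h1 with h | h
          · exact absurd h hp.ne'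
          · exact pow_eq_zero_iff (by norm_num) |>.1 h
        simp [h2]
      rw [hL0, ← hE0]
      have : 0 ≤ 1 * Real.sqrt A * (σ 0 * φ 0 ^ 2 + D + 0) := by positivity
      linarith
    · -- main case
      set B := σ 0 * φ 0 ^ 2 + D + E with hB_def
      have hBpos : 0 < B := by
        rw [hB_def]; linarith
      have hsA : 0 < Real.sqrt A := Real.sqrt_pos.2 hApos
      have hsA2 : Real.sqrt A * Real.sqrt A = A := Real.mul_self_sqrt hAnn
      set l := B / Real.sqrt A with hl_def
      have hl : 0 < l := div_pos hBpos hsA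
      have hFB : F ≤ B * B := by
        calc F ≤ (D + E) * E := hFle
          _ ≤ B * B := by nlinarith
      calc L ≤ l / 2 * A + 1 / (2 * l) * F := hLle l hl
        _ ≤ l / 2 * A + 1 / (2 * l) * (B * B) := by
            have h0 : 0 ≤ 1 / (2 * l) := by positivity
            have h := mul_le_mul_of_nonneg_left hFB h0
            linarith
        _ = Real.sqrt A * B := by
            rw [hl_def]
            field_simp
            nlinarith [hsA2, hsA, hBpos]
        _ = 1 * Real.sqrt A * B := by ring
end

section
/- (Boundary derivative estimate for steady states.) There exist constants δ₀ > 0 and C > 0, depending only on A₁, A₂, γ, α, μ, ρ₊, n₊, u₊, such that the following holds. Let u₋ < 0 with |u₋ − u₊| ≤ δ₀, and let (ρ̃, ũ, ñ, ṽ) : [0,∞) → ℝ⁴ be twice continuously differentiable with: ρ̃(x)ũ(x) = ρ₊u₊ and ñ(x)ṽ(x) = n₊u₊ for all x ≥ 0; (ρ̃ũ² + A₁ρ̃^γ)'(x) = μũ''(x) + ñ(x)(ṽ(x) − ũ(x)) and (ñṽ² + A₂ñ^α)'(x) = (ñṽ')'(x) − ñ(x)(ṽ(x) − ũ(x)) for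 all x > 0; ũ(0) = ṽ(0) = u₋; (ρ̃, ũ, ñ, ṽ)(x) → (ρ₊, u₊, n₊, u₊) and (ũ'(x), ṽ'(x)) → (0,0) as x → ∞; inf ρ̃ > 0, inf ñ > 0; ũ', ṽ', and ṽ − ũ are square-integrable on (0,∞); and sup_{x≥0} |(ρ̃ − ρ₊, ũ − u₊, ñ − n₊, ṽ − u₊)(x)| ≤ δ₀. Then |ũ'(0)| ≤ C|u₋ − u₊| and |ṽ'(0)| ≤ C|u₋ − u₊|. -/
open Real MeasureTheory Set Filter

noncomputable def hfun (c A e : ℝ) (s : ℝ) : ℝ := c * s + A * (c / s) ^ e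
noncomputable def h1fun (c A e : ℝ) (s : ℝ) : ℝ :=
  c + A * (e * (c / s) ^ (e - 1) * (c * -(s ^ 2)⁻¹))

lemma hfun_hasDerivAt {c s : ℝ} (A e : ℝ) (hc : c < 0) (hs : s < 0) :
    HasDerivAt (hfun c A e) (h1fun c A e s) s := by
  have hs0 : s ≠ 0 := ne_of_lt hs
  have hq : 0 < c / s := div_pos_of_neg_of_neg hc hs
  have H1 : HasDerivAt (fun t : ℝ => c / t) (c * -(s ^ 2)⁻¹) s := by
    simpa [div_eq_mul_inv] using (hasDerivAt_inv hs0).const_mul c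
  have H2 : HasDerivAt (fun x : ℝ => x ^ e) (e * (c / s) ^ (e - 1)) (c / s) :=
    Real.hasDerivAt_rpow_const (Or.inl (ne_of_gt hq))
  have H3 : HasDerivAt (fun t : ℝ => (c / t) ^ e)
      (e * (c / s) ^ (e - 1) * (c * -(s ^ 2)⁻¹)) s := H2.comp s H1
  have H4 := ((hasDerivAt_id s).const_mul c).add (H3.const_mul A)
  have H5 : HasDerivAt (hfun c A e) (c * 1 + A * (e * (c / s) ^ (e - 1) * (c * -(s ^ 2)⁻¹))) s := H4
  simpa [h1fun] using H5

lemma h1fun_continuousOn (c A e : ℝ) (hc : c < 0) :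
    ContinuousOn (h1fun c A e) (Iio 0) := by
  intro s hs
  have hs0 : s ≠ 0 := ne_of_lt hs
  have hq : c / s ≠ 0 := ne_of_gt (div_pos_of_neg_of_neg hc hs)
  apply ContinuousAt.continuousWithinAt
  have hdiv : ContinuousAt (fun t : ℝ => c / t) s :=
    (continuousAt_const.div continuousAt_id hs0)
  have h1 : ContinuousAt (fun t : ℝ => (c / t) ^ (e - 1)) s := hdiv.rpow_const (Or.inl hq)
  have h2 : ContinuousAt (fun t : ℝ => c * -(t ^ 2)⁻¹) s :=
    continuousAt_const.mul (((continuousAt_id.pow 2).inv₀ (pow_ne_zero 2 hs0)).neg)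
  exact continuousAt_const.add
    (continuousAt_const.mul ((continuousAt_const.mul h1).mul h2))

lemma hfun_continuousOn (c A e : ℝ) (hc : c < 0) :
    ContinuousOn (hfun c A e) (Iio 0) := fun s hs =>
  ((hfun_hasDerivAt A e hc hs).continuousAt).continuousWithinAt

lemma hasDerivAt_congr_deriv {f : ℝ → ℝ} {a b x : ℝ} (h : HasDerivAt f a x)
    (e : a = b) : HasDerivAt f b x := e ▸ h

lemma Icc_subset_Iio {l r : ℝ} (hr : r < 0) : Icc l r ⊆ Iio 0 :=
  fun t ht => lt_of_le_of_lt ht.2 hr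

lemma hfun_incr_bound {c A e l r K : ℝ} (hc : c < 0) (hr : r < 0)
    (hK : ∀ t ∈ Icc l r, |h1fun c A e t| ≤ K) {s u0 : ℝ}
    (hs : s ∈ Icc l r) (hu0 : u0 ∈ Icc l r) :
    |hfun c A e s - hfun c A e u0| ≤ K * |s - u0| := by
  have hsub : uIcc u0 s ⊆ Icc l r := uIcc_subset_Icc hu0 hs
  have hsub' : uIcc u0 s ⊆ Iio 0 := hsub.trans (Icc_subset_Iio hr)
  have hftc : ∫ t in u0..s, h1fun c A e t = hfun c A e s - hfun c A e u0 := by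
    apply intervalIntegral.integral_eq_sub_of_hasDerivAt
    · exact fun t ht => hfun_hasDerivAt A e hc (hsub' ht)
    · exact ((h1fun_continuousOn c A e hc).mono hsub').intervalIntegrable
  rw [← hftc]
  have := intervalIntegral.norm_integral_le_of_norm_le_const
    (C := K) (f := fun t => h1fun c A e t) (a := u0) (b := s)
    (fun t ht => hK t (hsub (uIoc_subset_uIcc ht)))
  simpa [Real.norm_eq_abs, abs_sub_comm s u0] using this

lemma Phi_bound {c A e l r K : ℝ} (hc : c < 0) (hr : r < 0)
    (hK : ∀ t ∈ Icc l r, |h1fun c A e t| ≤ K) (hK0 : 0 ≤ K) {s u0 : ℝ}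
    (hs : s ∈ Icc l r) (hu0 : u0 ∈ Icc l r) :
    |∫ t in u0..s, (hfun c A e t - hfun c A e u0)| ≤ K * |s - u0| * |s - u0| := by
  have hsub : uIcc u0 s ⊆ Icc l r := uIcc_subset_Icc hu0 hs
  have hbd : ∀ t ∈ uIoc u0 s, ‖hfun c A e t - hfun c A e u0‖ ≤ K * |s - u0| := by
    intro t ht
    have ht' := uIoc_subset_uIcc ht
    have h1 : |hfun c A e t - hfun c A e u0| ≤ K * |t - u0| :=
      hfun_incr_bound hc hr hK (hsub ht') hu0
    have h2 : |t - u0| ≤ |s - u0| := by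
      rcases le_total u0 s with h | h
      · rw [uIcc_of_le h] at ht'
        rw [abs_of_nonneg (by linarith [ht'.1]), abs_of_nonneg (by linarith)]
        linarith [ht'.2]
      · rw [uIcc_of_ge h] at ht'
        rw [abs_of_nonpos (by linarith [ht'.2]), abs_of_nonpos (by linarith)]
        linarith [ht'.1]
    calc |hfun c A e t - hfun c A e u0| ≤ K * |t - u0| := h1
      _ ≤ K * |s - u0| := by nlinarith
  have := intervalIntegral.norm_integral_le_of_norm_le_const hbd
  simpa [Real.norm_eq_abs, abs_sub_comm s u0] using this

lemma Phi_hasDerivAt {c u0 s : ℝ} (A e : ℝ) (hc : c < 0) (hu0 : u0 < 0) (hs : s < 0) :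
    HasDerivAt (fun t => ∫ y in u0..t, (hfun c A e y - hfun c A e u0))
      (hfun c A e s - hfun c A e u0) s := by
  have hcont : ContinuousOn (fun y => hfun c A e y - hfun c A e u0) (Iio 0) :=
    (hfun_continuousOn c A e hc).sub continuousOn_const
  have hsub : uIcc u0 s ⊆ Iio 0 := by
    intro t ht
    rcases le_total u0 s with h | h
    · rw [uIcc_of_le h] at ht; exact lt_of_le_of_lt ht.2 hs
    · rw [uIcc_of_ge h] at ht; exact lt_of_le_of_lt ht.2 hu0
  apply intervalIntegral.integral_hasDerivAt_right
  · exact (hcont.mono hsub).intervalIntegrable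
  · exact hcont.stronglyMeasurableAtFilter isOpen_Iio _ hs
  · exact ((hfun_continuousOn c A e hc).continuousAt (Iio_mem_nhds hs)).sub continuousAt_const

set_option maxHeartbeats 1000000 in
/-- boundary derivative estimate for steady states
(Lemma 2.1). -/
theorem stmt12 (A₁ A₂ γ α μ ρp np up : ℝ)
    (hA₁ : 0 < A₁) (hA₂ : 0 < A₂) (hγ : 1 ≤ γ) (hα : 1 ≤ α) (hμ : 0 < μ)
    (hρ : 0 < ρp) (hn : 0 < np) (hu : up < 0) :
    ∃ δ₀ > 0, ∃ C > 0, ∀ um : ℝ, um < 0 → |um - up| ≤ δ₀ →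
      ∀ sρ su sn sv : ℝ → ℝ,
        ContDiff ℝ 2 sρ → ContDiff ℝ 2 su → ContDiff ℝ 2 sn → ContDiff ℝ 2 sv →
        (∀ x ≥ (0:ℝ), sρ x * su x = ρp * up ∧ sn x * sv x = np * up) →
        (∀ x > (0:ℝ),
          deriv (fun y => sρ y * su y ^ 2 + A₁ * sρ y ^ γ) x =
            μ * deriv (deriv su) x + sn x * (sv x - su x) ∧
          deriv (fun y => sn y * sv y ^ 2 + A₂ * sn y ^ α) x =
            deriv (fun y => sn y * deriv sv y) x - sn x * (sv x - su x)) →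
        su 0 = um → sv 0 = um →
        Tendsto sρ atTop (nhds ρp) → Tendsto su atTop (nhds up) →
        Tendsto sn atTop (nhds np) → Tendsto sv atTop (nhds up) →
        Tendsto (deriv su) atTop (nhds 0) → Tendsto (deriv sv) atTop (nhds 0) →
        (∃ m > (0:ℝ), ∀ x ≥ (0:ℝ), m ≤ sρ x ∧ m ≤ sn x) →
        IntegrableOn (fun x => deriv su x ^ 2) (Ioi 0) →
        IntegrableOn (fun x => deriv sv x ^ 2) (Ioi 0) →
        IntegrableOn (fun x => (sv x - su x) ^ 2) (Ioi 0) →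
        (∀ x ≥ (0:ℝ), |sρ x - ρp| ≤ δ₀ ∧ |su x - up| ≤ δ₀ ∧
          |sn x - np| ≤ δ₀ ∧ |sv x - up| ≤ δ₀) →
        |deriv su 0| ≤ C * |um - up| ∧ |deriv sv 0| ≤ C * |um - up| := by
  have hup2 : up / 2 < 0 := by linarith
  have hc1 : ρp * up < 0 := mul_neg_of_pos_of_neg hρ hu
  have hc2 : np * up < 0 := mul_neg_of_pos_of_neg hn hu
  have hIsub : Icc (3*up/2) (up/2) ⊆ Iio 0 := Icc_subset_Iio hup2
  obtain ⟨K₁', hK₁'⟩ := isCompact_Icc.exists_bound_of_continuousOn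
    ((h1fun_continuousOn (ρp*up) A₁ γ hc1).mono hIsub)
  obtain ⟨K₂', hK₂'⟩ := isCompact_Icc.exists_bound_of_continuousOn
    ((h1fun_continuousOn (np*up) A₂ α hc2).mono hIsub)
  set K₁ : ℝ := max K₁' 1 with hK₁def
  set K₂ : ℝ := max K₂' 1 with hK₂def
  have hK₁pos : (0:ℝ) < K₁ := lt_of_lt_of_le one_pos (le_max_right _ _)
  have hK₂pos : (0:ℝ) < K₂ := lt_of_lt_of_le one_pos (le_max_right _ _)
  have hK₁ : ∀ t ∈ Icc (3*up/2) (up/2), |h1fun (ρp*up) A₁ γ t| ≤ K₁ :=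
    fun t ht => le_trans (by simpa using hK₁' t ht) (le_max_left _ _)
  have hK₂ : ∀ t ∈ Icc (3*up/2) (up/2), |h1fun (np*up) A₂ α t| ≤ K₂ :=
    fun t ht => le_trans (by simpa using hK₂' t ht) (le_max_left _ _)
  clear_value K₁ K₂
  set a0 : ℝ := 2*K₁ + 2*K₂ with ha0def
  set b0 : ℝ := μ + 2*np with hb0def
  set cc1 : ℝ := ((2*K₁+2*np)/μ + 3)/μ with hcc1def
  set cc2 : ℝ := 9/(4*np^2)*(6*K₂+12*np) with hcc2def
  have hcc1pos : 0 < cc1 := by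
    rw [hcc1def]; positivity
  have hcc2pos : 0 < cc2 := by
    rw [hcc2def]; positivity
  set aC : ℝ := 2*(cc1+cc2)*a0 with haCdef
  set bC : ℝ := 2*(cc1+cc2)*b0 with hbCdef
  have haCpos : 0 < aC := by rw [haCdef, ha0def]; positivity
  have hbCpos : 0 < bC := by rw [hbCdef, hb0def]; positivity
  clear_value a0 b0 cc1 cc2 aC bC
  refine ⟨-up/2, by linarith, aC + bC + 1, by linarith, ?_⟩
  intro um hum hδ₀ sρ su sn sv hρC2 huC2 hnC2 hvC2 hcons hODE hsu0 hsv0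
    tρ tu tn tv tdu tdv hm hIu hIv hIw hbd
  -- differentiability facts
  have hsuD : Differentiable ℝ su := huC2.differentiable (by norm_num)
  have hsvD : Differentiable ℝ sv := hvC2.differentiable (by norm_num)
  have hsnD : Differentiable ℝ sn := hnC2.differentiable (by norm_num)
  have hsu1 : ContDiff ℝ 1 (deriv su) := by
    have h2 : ContDiff ℝ ((1:ℕ)+1) su := by exact_mod_cast huC2
    exact (contDiff_succ_iff_deriv.mp h2).2.2
  have hsv1 : ContDiff ℝ 1 (deriv sv) := by
    have h2 : ContDiff ℝ ((1:ℕ)+1) sv := by exact_mod_cast hvC2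
    exact (contDiff_succ_iff_deriv.mp h2).2.2
  have hsuD2 : Differentiable ℝ (deriv su) := hsu1.differentiable (by norm_num)
  have hsvD2 : Differentiable ℝ (deriv sv) := hsv1.differentiable (by norm_num)
  -- pointwise range facts
  have hsuR : ∀ x ≥ (0:ℝ), su x ∈ Icc (3*up/2) (up/2) := by
    intro x hx
    have h := (hbd x hx).2.1
    rw [abs_le] at h
    constructor <;> [linarith [h.1]; linarith [h.2]]
  have hsvR : ∀ x ≥ (0:ℝ), sv x ∈ Icc (3*up/2) (up/2) := by
    intro x hx
    have h := (hbd x hx).2.2.2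
    rw [abs_le] at h
    constructor <;> [linarith [h.1]; linarith [h.2]]
  have hsuN : ∀ x ≥ (0:ℝ), su x < 0 := fun x hx => hIsub (hsuR x hx)
  have hsvN : ∀ x ≥ (0:ℝ), sv x < 0 := fun x hx => hIsub (hsvR x hx)
  have humR : um ∈ Icc (3*up/2) (up/2) := by
    rw [abs_le] at hδ₀
    constructor <;> [linarith [hδ₀.1]; linarith [hδ₀.2]]
  have hupR : up ∈ Icc (3*up/2) (up/2) := ⟨by linarith, by linarith⟩
  have hsnB : ∀ x ≥ (0:ℝ), 2*np/3 ≤ sn x ∧ sn x ≤ 2*np := by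
    intro x hx
    have h := (hcons x hx).2
    have hv1 := (hsvR x hx).1
    have hv2 := (hsvR x hx).2
    have hvneg : sv x < 0 := hsvN x hx
    have he : sn x = np*up / sv x := by rw [eq_div_iff (ne_of_lt hvneg)]; exact h
    constructor
    · rw [he, le_div_iff_of_neg hvneg]
      have := mul_le_mul_of_nonneg_left hv1 (by linarith only [hn] : (0:ℝ) ≤ 2*np/3)
      linarith only [this]
    · rw [he, div_le_iff_of_neg hvneg]
      have := mul_le_mul_of_nonneg_left hv2 (by linarith only [hn] : (0:ℝ) ≤ 2*np)
      linarith only [this]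
  set δ : ℝ := |um - up| with hδdef
  have hδ0 : 0 ≤ δ := by rw [hδdef]; positivity
  clear_value δ
  -- key ODE rewrites
  have key1 : ∀ x > (0:ℝ), μ * deriv (deriv su) x
      = h1fun (ρp*up) A₁ γ (su x) * deriv su x - sn x * (sv x - su x) := by
    intro x hx
    have hx0 : (0:ℝ) ≤ x := hx.le
    have hev : (fun y => sρ y * su y ^ 2 + A₁ * sρ y ^ γ) =ᶠ[nhds x]
        (fun y => hfun (ρp*up) A₁ γ (su y)) := by
      filter_upwards [IsOpen.mem_nhds isOpen_Ioi hx] with y hy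
      have hy0 : (0:ℝ) ≤ y := le_of_lt hy
      have h1 := (hcons y hy0).1
      have hyn : su y ≠ 0 := ne_of_lt (hsuN y hy0)
      have hρy : sρ y = (ρp*up) / su y := by rw [eq_div_iff hyn]; exact h1
      have hsq : (ρp*up) / su y * su y ^ 2 = (ρp*up) * su y := by
        field_simp
      simp only [hfun]
      rw [hρy, hsq]
    have hd : deriv (fun y => sρ y * su y ^ 2 + A₁ * sρ y ^ γ) x
        = h1fun (ρp*up) A₁ γ (su x) * deriv su x := by
      rw [hev.deriv_eq]
      exact ((hfun_hasDerivAt A₁ γ hc1 (hsuN x hx0)).comp x (hsuD x).hasDerivAt).deriv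
    have h2 := (hODE x hx).1
    rw [hd] at h2
    linarith
  have keyD : ∀ x > (0:ℝ), deriv (fun y => sn y * deriv sv y) x
      = h1fun (np*up) A₂ α (sv x) * deriv sv x + sn x * (sv x - su x) := by
    intro x hx
    have hx0 : (0:ℝ) ≤ x := hx.le
    have hev : (fun y => sn y * sv y ^ 2 + A₂ * sn y ^ α) =ᶠ[nhds x]
        (fun y => hfun (np*up) A₂ α (sv y)) := by
      filter_upwards [IsOpen.mem_nhds isOpen_Ioi hx] with y hy
      have hy0 : (0:ℝ) ≤ y := le_of_lt hy
      have h1 := (hcons y hy0).2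
      have hyn : sv y ≠ 0 := ne_of_lt (hsvN y hy0)
      have hny : sn y = (np*up) / sv y := by rw [eq_div_iff hyn]; exact h1
      have hsq : (np*up) / sv y * sv y ^ 2 = (np*up) * sv y := by
        field_simp
      simp only [hfun]
      rw [hny, hsq]
    have hd : deriv (fun y => sn y * sv y ^ 2 + A₂ * sn y ^ α) x
        = h1fun (np*up) A₂ α (sv x) * deriv sv x := by
      rw [hev.deriv_eq]
      exact ((hfun_hasDerivAt A₂ α hc2 (hsvN x hx0)).comp x (hsvD x).hasDerivAt).deriv
    have h2 := (hODE x hx).2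
    rw [hd] at h2
    linarith
  -- the potential function P and energy density Q
  set Φ1 : ℝ → ℝ := fun t => ∫ y in up..t, (hfun (ρp*up) A₁ γ y - hfun (ρp*up) A₁ γ up)
    with hΦ1def
  set Φ2 : ℝ → ℝ := fun t => ∫ y in up..t, (hfun (np*up) A₂ α y - hfun (np*up) A₂ α up)
    with hΦ2def
  set P : ℝ → ℝ := fun x =>
      μ * (deriv su x * (su x - up)) + sn x * deriv sv x * (sv x - up)
      - (hfun (ρp*up) A₁ γ (su x) - hfun (ρp*up) A₁ γ up) * (su x - up)
      - (hfun (np*up) A₂ α (sv x) - hfun (np*up) A₂ α up) * (sv x - up)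
      + Φ1 (su x) + Φ2 (sv x) with hPdef
  set Q : ℝ → ℝ := fun x =>
      μ * deriv su x ^ 2 + sn x * deriv sv x ^ 2 + sn x * (sv x - su x) ^ 2 with hQdef
  clear_value Φ1 Φ2 P Q
  have hQcont : Continuous Q := by
    rw [hQdef]
    exact ((continuous_const.mul (hsu1.continuous.pow 2)).add
      (hnC2.continuous.mul (hsv1.continuous.pow 2))).add
      (hnC2.continuous.mul ((hvC2.continuous.sub huC2.continuous).pow 2))
  have hPderiv : ∀ x > (0:ℝ), HasDerivAt P (Q x) x := by
    intro x hx
    have hx0 : (0:ℝ) ≤ x := hx.le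
    have Hsu : HasDerivAt su (deriv su x) x := (hsuD x).hasDerivAt
    have Hsv : HasDerivAt sv (deriv sv x) x := (hsvD x).hasDerivAt
    have Hdu : HasDerivAt (deriv su) (deriv (deriv su) x) x := (hsuD2 x).hasDerivAt
    have HD : HasDerivAt (fun y => sn y * deriv sv y)
        (deriv (fun y => sn y * deriv sv y) x) x := ((hsnD x).mul (hsvD2 x)).hasDerivAt
    have Hh1 : HasDerivAt (fun y => hfun (ρp*up) A₁ γ (su y))
        (h1fun (ρp*up) A₁ γ (su x) * deriv su x) x :=
      (hfun_hasDerivAt A₁ γ hc1 (hsuN x hx0)).comp x Hsu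
    have Hh2 : HasDerivAt (fun y => hfun (np*up) A₂ α (sv y))
        (h1fun (np*up) A₂ α (sv x) * deriv sv x) x :=
      (hfun_hasDerivAt A₂ α hc2 (hsvN x hx0)).comp x Hsv
    have HΦ1 : HasDerivAt (fun y => Φ1 (su y))
        ((hfun (ρp*up) A₁ γ (su x) - hfun (ρp*up) A₁ γ up) * deriv su x) x := by
      rw [hΦ1def]
      exact (Phi_hasDerivAt A₁ γ hc1 hu (hsuN x hx0)).comp x Hsu
    have HΦ2 : HasDerivAt (fun y => Φ2 (sv y))
        ((hfun (np*up) A₂ α (sv x) - hfun (np*up) A₂ α up) * deriv sv x) x := by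
      rw [hΦ2def]
      exact (Phi_hasDerivAt A₂ α hc2 hu (hsvN x hx0)).comp x Hsv
    have Hφ : HasDerivAt (fun y => su y - up) (deriv su x) x := Hsu.sub_const up
    have Hψ : HasDerivAt (fun y => sv y - up) (deriv sv x) x := Hsv.sub_const up
    have HP := ((((((Hdu.mul Hφ).const_mul μ).add (HD.mul Hψ)).sub
        ((Hh1.sub_const (hfun (ρp*up) A₁ γ up)).mul Hφ)).sub
        ((Hh2.sub_const (hfun (np*up) A₂ α up)).mul Hψ)).add HΦ1).add HΦ2
    rw [hPdef]
    refine hasDerivAt_congr_deriv HP ?_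
    rw [hQdef]
    have e1 := key1 x hx
    have e2 := keyD x hx
    linear_combination (su x - up) * e1 + (sv x - up) * e2
  have hPcont : ContinuousOn P (Ici 0) := by
    rw [hPdef]
    intro x hx
    have hxn : su x < 0 := hsuN x hx
    have hxv : sv x < 0 := hsvN x hx
    apply ContinuousAt.continuousWithinAt
    have cdu : ContinuousAt (deriv su) x := hsu1.continuous.continuousAt
    have cdv : ContinuousAt (deriv sv) x := hsv1.continuous.continuousAt
    have csu : ContinuousAt su x := huC2.continuous.continuousAt
    have csv : ContinuousAt sv x := hvC2.continuous.continuousAt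
    have csn : ContinuousAt sn x := hnC2.continuous.continuousAt
    have ch1 : ContinuousAt (fun y => hfun (ρp*up) A₁ γ (su y)) x :=
      ((hfun_hasDerivAt A₁ γ hc1 hxn).continuousAt).comp csu
    have ch2 : ContinuousAt (fun y => hfun (np*up) A₂ α (sv y)) x :=
      ((hfun_hasDerivAt A₂ α hc2 hxv).continuousAt).comp csv
    have cΦ1 : ContinuousAt (fun y => Φ1 (su y)) x := by
      rw [hΦ1def]
      exact ((Phi_hasDerivAt A₁ γ hc1 hu hxn).continuousAt).comp csu
    have cΦ2 : ContinuousAt (fun y => Φ2 (sv y)) x := by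
      rw [hΦ2def]
      exact ((Phi_hasDerivAt A₂ α hc2 hu hxv).continuousAt).comp csv
    exact (((((continuousAt_const.mul (cdu.mul (csu.sub continuousAt_const))).add
      ((csn.mul cdv).mul (csv.sub continuousAt_const))).sub
      ((ch1.sub continuousAt_const).mul (csu.sub continuousAt_const))).sub
      ((ch2.sub continuousAt_const).mul (csv.sub continuousAt_const))).add cΦ1).add cΦ2
  have hQint : IntegrableOn Q (Ioi 0) := by
    rw [hQdef]
    have h3 : IntegrableOn (fun x => sn x * deriv sv x ^ 2) (Ioi 0) := by
      apply Integrable.mono' (hIv.const_mul (2*np))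
        ((hnC2.continuous.mul (hsv1.continuous.pow 2)).aestronglyMeasurable)
      rw [ae_restrict_iff' measurableSet_Ioi]
      refine ae_of_all _ (fun x hx => ?_)
      have hb := hsnB x (le_of_lt hx)
      have h0 : (0:ℝ) ≤ sn x := by linarith only [hb.1, hn]
      simp only [Pi.mul_apply, Pi.pow_apply, Pi.sub_apply]
      rw [Real.norm_eq_abs, abs_of_nonneg (mul_nonneg h0 (sq_nonneg _))]
      exact mul_le_mul_of_nonneg_right hb.2 (sq_nonneg _)
    have h4 : IntegrableOn (fun x => sn x * (sv x - su x) ^ 2) (Ioi 0) := by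
      apply Integrable.mono' (hIw.const_mul (2*np))
        ((hnC2.continuous.mul ((hvC2.continuous.sub huC2.continuous).pow 2)).aestronglyMeasurable)
      rw [ae_restrict_iff' measurableSet_Ioi]
      refine ae_of_all _ (fun x hx => ?_)
      have hb := hsnB x (le_of_lt hx)
      have h0 : (0:ℝ) ≤ sn x := by linarith only [hb.1, hn]
      simp only [Pi.mul_apply, Pi.pow_apply, Pi.sub_apply]
      rw [Real.norm_eq_abs, abs_of_nonneg (mul_nonneg h0 (sq_nonneg _))]
      exact mul_le_mul_of_nonneg_right hb.2 (sq_nonneg _)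
    exact ((hIu.const_mul μ).add h3).add h4
  have hFTC : ∀ R ≥ (0:ℝ), ∫ x in (0:ℝ)..R, Q x = P R - P 0 := by
    intro R hR
    exact intervalIntegral.integral_eq_sub_of_hasDeriv_right_of_le hR
      (hPcont.mono (Icc_subset_Ici_self))
      (fun x hx => (hPderiv x hx.1).hasDerivWithinAt)
      (hQcont.intervalIntegrable 0 R)
  have hPlim : Tendsto P atTop (nhds 0) := by
    rw [hPdef]
    have lφ : Tendsto (fun R => su R - up) atTop (nhds 0) := by
      simpa using tu.sub_const up
    have lψ : Tendsto (fun R => sv R - up) atTop (nhds 0) := by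
      simpa using tv.sub_const up
    have lh1 : Tendsto (fun R => hfun (ρp*up) A₁ γ (su R)) atTop
        (nhds (hfun (ρp*up) A₁ γ up)) :=
      ((hfun_hasDerivAt A₁ γ hc1 hu).continuousAt.tendsto).comp tu
    have lh2 : Tendsto (fun R => hfun (np*up) A₂ α (sv R)) atTop
        (nhds (hfun (np*up) A₂ α up)) :=
      ((hfun_hasDerivAt A₂ α hc2 hu).continuousAt.tendsto).comp tv
    have lΦ1 : Tendsto (fun R => Φ1 (su R)) atTop (nhds 0) := by
      rw [hΦ1def]
      have := ((Phi_hasDerivAt A₁ γ hc1 hu hu).continuousAt.tendsto).comp tu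
      simpa [Function.comp_def] using this
    have lΦ2 : Tendsto (fun R => Φ2 (sv R)) atTop (nhds 0) := by
      rw [hΦ2def]
      have := ((Phi_hasDerivAt A₂ α hc2 hu hu).continuousAt.tendsto).comp tv
      simpa [Function.comp_def] using this
    have H := ((((((tdu.mul lφ).const_mul μ).add ((tn.mul tdv).mul lψ)).sub
      ((lh1.sub_const (hfun (ρp*up) A₁ γ up)).mul lφ)).sub
      ((lh2.sub_const (hfun (np*up) A₂ α up)).mul lψ)).add lΦ1).add lΦ2
    simpa using H
  have hIQ : ∫ x in Ioi (0:ℝ), Q x = - P 0 := by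
    have h1 := MeasureTheory.intervalIntegral_tendsto_integral_Ioi (μ := volume)
      (0:ℝ) hQint tendsto_id
    have h2 : Tendsto (fun R => P R - P 0) atTop (nhds (0 - P 0)) := hPlim.sub_const _
    have h3 : (fun R : ℝ => ∫ x in (0:ℝ)..R, Q x) =ᶠ[atTop] fun R => P R - P 0 := by
      filter_upwards [eventually_ge_atTop (0:ℝ)] with R hR using hFTC R hR
    have h4 : Tendsto (fun R : ℝ => ∫ x in (0:ℝ)..R, Q x) atTop
        (nhds (∫ x in Ioi (0:ℝ), Q x)) := by simpa using h1
    have := tendsto_nhds_unique (h4.congr' h3) h2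
    linarith
  set Iu : ℝ := ∫ x in Ioi (0:ℝ), deriv su x ^ 2 with hIudef
  set Iv : ℝ := ∫ x in Ioi (0:ℝ), deriv sv x ^ 2 with hIvdef
  set Iw : ℝ := ∫ x in Ioi (0:ℝ), (sv x - su x) ^ 2 with hIwdef
  clear_value Iu Iv Iw
  have hIunn : 0 ≤ Iu := by
    rw [hIudef]; exact setIntegral_nonneg measurableSet_Ioi (fun x _ => sq_nonneg _)
  have hIvnn : 0 ≤ Iv := by
    rw [hIvdef]; exact setIntegral_nonneg measurableSet_Ioi (fun x _ => sq_nonneg _)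
  have hIwnn : 0 ≤ Iw := by
    rw [hIwdef]; exact setIntegral_nonneg measurableSet_Ioi (fun x _ => sq_nonneg _)
  have hEu : μ * Iu ≤ - P 0 := by
    rw [← hIQ, hIudef, ← integral_const_mul]
    apply setIntegral_mono_on (hIu.const_mul μ) hQint measurableSet_Ioi
    intro x hx
    have hb := hsnB x (le_of_lt hx)
    have h0 : (0:ℝ) ≤ sn x := by linarith only [hb.1, hn]
    simp only [hQdef]
    linarith only [mul_nonneg h0 (sq_nonneg (deriv sv x)),
      mul_nonneg h0 (sq_nonneg (sv x - su x))]
  have hEv : (2*np/3) * Iv ≤ - P 0 := by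
    rw [← hIQ, hIvdef, ← integral_const_mul]
    apply setIntegral_mono_on (hIv.const_mul (2*np/3)) hQint measurableSet_Ioi
    intro x hx
    have hb := hsnB x (le_of_lt hx)
    have h0 : (0:ℝ) ≤ sn x := by linarith only [hb.1, hn]
    simp only [hQdef]
    have h1 : 2*np/3 * deriv sv x ^ 2 ≤ sn x * deriv sv x ^ 2 :=
      mul_le_mul_of_nonneg_right hb.1 (sq_nonneg _)
    linarith only [h1, mul_nonneg hμ.le (sq_nonneg (deriv su x)),
      mul_nonneg h0 (sq_nonneg (sv x - su x))]
  have hEw : (2*np/3) * Iw ≤ - P 0 := by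
    rw [← hIQ, hIwdef, ← integral_const_mul]
    apply setIntegral_mono_on (hIw.const_mul (2*np/3)) hQint measurableSet_Ioi
    intro x hx
    have hb := hsnB x (le_of_lt hx)
    have h0 : (0:ℝ) ≤ sn x := by linarith only [hb.1, hn]
    simp only [hQdef]
    have h1 : 2*np/3 * (sv x - su x) ^ 2 ≤ sn x * (sv x - su x) ^ 2 :=
      mul_le_mul_of_nonneg_right hb.1 (sq_nonneg _)
    linarith only [h1, mul_nonneg hμ.le (sq_nonneg (deriv su x)),
      mul_nonneg h0 (sq_nonneg (deriv sv x))]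
  have hP0 : - P 0 ≤ a0*δ^2 + δ*(μ*|deriv su 0| + 2*np*|deriv sv 0|) := by
    have h1b : |hfun (ρp*up) A₁ γ um - hfun (ρp*up) A₁ γ up| ≤ K₁*δ := by
      rw [hδdef]
      exact hfun_incr_bound hc1 hup2 hK₁ humR hupR
    have h2b : |hfun (np*up) A₂ α um - hfun (np*up) A₂ α up| ≤ K₂*δ := by
      rw [hδdef]
      exact hfun_incr_bound hc2 hup2 hK₂ humR hupR
    have h3b : |Φ1 um| ≤ K₁*δ*δ := by
      rw [hΦ1def, hδdef]
      exact Phi_bound hc1 hup2 hK₁ hK₁pos.le humR hupR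
    have h4b : |Φ2 um| ≤ K₂*δ*δ := by
      rw [hΦ2def, hδdef]
      exact Phi_bound hc2 hup2 hK₂ hK₂pos.le humR hupR
    have hsn0 := hsnB 0 le_rfl
    have hP0val : P 0 = μ * (deriv su 0 * (um - up)) + sn 0 * deriv sv 0 * (um - up)
        - (hfun (ρp*up) A₁ γ um - hfun (ρp*up) A₁ γ up) * (um - up)
        - (hfun (np*up) A₂ α um - hfun (np*up) A₂ α up) * (um - up)
        + Φ1 um + Φ2 um := by rw [hPdef]; simp only [hsu0, hsv0]
    rw [hP0val, ha0def]
    have hd : |um - up| = δ := hδdef.symm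
    have a1 : -(μ * (deriv su 0 * (um - up))) ≤ μ*|deriv su 0| * δ := by
      calc -(μ * (deriv su 0 * (um - up))) ≤ |μ * (deriv su 0 * (um - up))| := neg_le_abs _
        _ = μ*|deriv su 0| * δ := by
          rw [abs_mul, abs_mul, abs_of_pos hμ, hd, mul_assoc]
    have a2 : -(sn 0 * deriv sv 0 * (um - up)) ≤ 2*np*|deriv sv 0| * δ := by
      have : -(sn 0 * deriv sv 0 * (um - up)) ≤ |sn 0 * deriv sv 0 * (um - up)| := neg_le_abs _
      rw [abs_mul, abs_mul, hd] at this
      have h0 : |sn 0| ≤ 2*np := by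
        rw [abs_of_nonneg (by linarith only [hsn0.1, hn] : (0:ℝ) ≤ sn 0)]; exact hsn0.2
      have h5 : |sn 0| * |deriv sv 0| * δ ≤ 2*np*|deriv sv 0| * δ :=
        mul_le_mul_of_nonneg_right
          (mul_le_mul_of_nonneg_right h0 (abs_nonneg _)) hδ0
      linarith only [this, h5]
    have a3 : (hfun (ρp*up) A₁ γ um - hfun (ρp*up) A₁ γ up) * (um - up) ≤ K₁*δ*δ := by
      have := le_abs_self ((hfun (ρp*up) A₁ γ um - hfun (ρp*up) A₁ γ up) * (um - up))
      rw [abs_mul, hd] at this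
      have h5 : |hfun (ρp*up) A₁ γ um - hfun (ρp*up) A₁ γ up| * δ ≤ K₁*δ*δ :=
        mul_le_mul_of_nonneg_right h1b hδ0
      linarith only [this, h5]
    have a4 : (hfun (np*up) A₂ α um - hfun (np*up) A₂ α up) * (um - up) ≤ K₂*δ*δ := by
      have := le_abs_self ((hfun (np*up) A₂ α um - hfun (np*up) A₂ α up) * (um - up))
      rw [abs_mul, hd] at this
      have h5 : |hfun (np*up) A₂ α um - hfun (np*up) A₂ α up| * δ ≤ K₂*δ*δ :=
        mul_le_mul_of_nonneg_right h2b hδ0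
      linarith only [this, h5]
    have a5 : -(Φ1 um) ≤ K₁*δ*δ := le_trans (neg_le_abs _) h3b
    have a6 : -(Φ2 um) ≤ K₂*δ*δ := le_trans (neg_le_abs _) h4b
    have hsq : δ^2 = δ*δ := by ring
    linarith only [a1, a2, a3, a4, a5, a6, hsq]
  have hcut : ∀ f : ℝ → ℝ, IntegrableOn f (Ioi 0) → (∀ x, 0 ≤ f x) →
      ∀ R ≥ (0:ℝ), ∫ x in (0:ℝ)..R, f x ≤ ∫ x in Ioi (0:ℝ), f x := by
    intro f hf hpos R hR
    rw [intervalIntegral.integral_of_le hR]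
    exact setIntegral_mono_set hf (ae_of_all _ hpos)
      (HasSubset.Subset.eventuallyLE Ioc_subset_Ioi_self)
  have hstep2u : μ * (deriv su 0)^2 ≤ (2*K₁+2*np)*Iu + 2*np*Iw := by
    have key : ∀ R ≥ (0:ℝ), μ*(deriv su 0)^2
        ≤ μ*(deriv su R)^2 + ((2*K₁+2*np)*Iu + 2*np*Iw) := by
      intro R hR
      have hq1cont : ContinuousOn
          (fun x => 2 * deriv su x *
            (h1fun (ρp*up) A₁ γ (su x) * deriv su x - sn x * (sv x - su x))) (Icc 0 R) := by
        intro x hx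
        have hxn : su x < 0 := hsuN x hx.1
        apply ContinuousAt.continuousWithinAt
        have ch : ContinuousAt (fun y => h1fun (ρp*up) A₁ γ (su y)) x :=
          ((h1fun_continuousOn (ρp*up) A₁ γ hc1).continuousAt
            (Iio_mem_nhds hxn)).comp (huC2.continuous.continuousAt)
        exact (continuousAt_const.mul (hsu1.continuous.continuousAt)).mul
          ((ch.mul (hsu1.continuous.continuousAt)).sub
           ((hnC2.continuous.continuousAt).mul
            ((hvC2.continuous.continuousAt).sub (huC2.continuous.continuousAt))))
      have hftc : ∫ x in (0:ℝ)..R,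
          (2 * deriv su x * (h1fun (ρp*up) A₁ γ (su x) * deriv su x - sn x * (sv x - su x)))
          = μ*(deriv su R)^2 - μ*(deriv su 0)^2 := by
        apply intervalIntegral.integral_eq_sub_of_hasDeriv_right_of_le hR
        · exact (continuous_const.mul (hsu1.continuous.pow 2)).continuousOn
        · intro x hx
          have H : HasDerivAt (fun y => μ * deriv su y ^ 2)
              (μ * ((2:ℕ) * deriv su x ^ 1 * deriv (deriv su) x)) x :=
            (((hsuD2 x).hasDerivAt).pow 2).const_mul μ
          refine (hasDerivAt_congr_deriv H ?_).hasDerivWithinAt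
          have e1 := key1 x hx.1
          push_cast
          rw [pow_one]
          linear_combination (2 * deriv su x) * e1
        · apply ContinuousOn.intervalIntegrable
          rwa [uIcc_of_le hR]
      have hIuR : ∫ x in (0:ℝ)..R, deriv su x ^ 2 ≤ Iu := by
        rw [hIudef]; exact hcut _ hIu (fun x => sq_nonneg _) R hR
      have hIwR : ∫ x in (0:ℝ)..R, (sv x - su x) ^ 2 ≤ Iw := by
        rw [hIwdef]; exact hcut _ hIw (fun x => sq_nonneg _) R hR
      have hmono : ∫ x in (0:ℝ)..R,
          (-((2*K₁+2*np) * deriv su x ^ 2 + 2*np*(sv x - su x)^2))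
          ≤ ∫ x in (0:ℝ)..R,
          (2 * deriv su x * (h1fun (ρp*up) A₁ γ (su x) * deriv su x - sn x * (sv x - su x))) := by
        apply intervalIntegral.integral_mono_on hR
        · exact (((continuous_const.mul (hsu1.continuous.pow 2)).add
            (continuous_const.mul ((hvC2.continuous.sub huC2.continuous).pow 2))).neg).intervalIntegrable _ _
        · apply ContinuousOn.intervalIntegrable; rwa [uIcc_of_le hR]
        · intro x hx
          have hKx := abs_le.mp (hK₁ (su x) (hsuR x hx.1))
          have hb := hsnB x hx.1
          have h0 : (0:ℝ) ≤ sn x := by linarith only [hb.1, hn]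
          have t1 : (0:ℝ) ≤ (K₁ + h1fun (ρp*up) A₁ γ (su x)) * deriv su x ^ 2 :=
            mul_nonneg (by linarith only [hKx.1]) (sq_nonneg _)
          have t2 : (0:ℝ) ≤ sn x * (deriv su x - (sv x - su x))^2 :=
            mul_nonneg h0 (sq_nonneg _)
          have t3 : (0:ℝ) ≤ (2*np - sn x) * (deriv su x ^ 2 + (sv x - su x)^2) :=
            mul_nonneg (by linarith only [hb.2]) (add_nonneg (sq_nonneg _) (sq_nonneg _))
          linarith only [t1, t2, t3]
      have hneg : ∫ x in (0:ℝ)..R, (-((2*K₁+2*np) * deriv su x ^ 2 + 2*np*(sv x - su x)^2))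
          = -((2*K₁+2*np) * (∫ x in (0:ℝ)..R, deriv su x ^ 2)
              + 2*np*(∫ x in (0:ℝ)..R, (sv x - su x)^2)) := by
        rw [intervalIntegral.integral_neg, intervalIntegral.integral_add
          (f := fun x => (2*K₁+2*np) * deriv su x ^ 2) (g := fun x => 2*np*(sv x - su x)^2)
          ((continuous_const.mul (hsu1.continuous.pow 2)).intervalIntegrable _ _)
          ((continuous_const.mul ((hvC2.continuous.sub huC2.continuous).pow 2)).intervalIntegrable _ _),
          intervalIntegral.integral_const_mul, intervalIntegral.integral_const_mul]
      have m1 : (2*K₁+2*np) * (∫ x in (0:ℝ)..R, deriv su x ^ 2) ≤ (2*K₁+2*np) * Iu :=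
        mul_le_mul_of_nonneg_left hIuR (by linarith only [hK₁pos, hn])
      have m2 : 2*np*(∫ x in (0:ℝ)..R, (sv x - su x)^2) ≤ 2*np*Iw :=
        mul_le_mul_of_nonneg_left hIwR (by linarith only [hn])
      rw [hneg, hftc] at hmono
      linarith only [hmono, m1, m2]
    have hlim : Tendsto (fun R => μ*(deriv su R)^2 + ((2*K₁+2*np)*Iu + 2*np*Iw)) atTop
        (nhds (μ*(0:ℝ)^2 + ((2*K₁+2*np)*Iu + 2*np*Iw))) :=
      ((tdu.pow 2).const_mul μ).add_const _
    have hev : ∀ᶠ R in atTop, μ*(deriv su 0)^2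
        ≤ μ*(deriv su R)^2 + ((2*K₁+2*np)*Iu + 2*np*Iw) := by
      filter_upwards [eventually_ge_atTop (0:ℝ)] with R hR using key R hR
    have hle := ge_of_tendsto hlim hev
    simpa using hle
  have hstep2v : (sn 0 * deriv sv 0)^2 ≤ (4*np*K₂+4*np^2)*Iv + 4*np^2*Iw := by
    have key : ∀ R ≥ (0:ℝ), (sn 0 * deriv sv 0)^2
        ≤ (sn R * deriv sv R)^2 + ((4*np*K₂+4*np^2)*Iv + 4*np^2*Iw) := by
      intro R hR
      have hq2cont : ContinuousOn
          (fun x => 2 * (sn x * deriv sv x) *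
            (h1fun (np*up) A₂ α (sv x) * deriv sv x + sn x * (sv x - su x))) (Icc 0 R) := by
        intro x hx
        have hxn : sv x < 0 := hsvN x hx.1
        apply ContinuousAt.continuousWithinAt
        have ch : ContinuousAt (fun y => h1fun (np*up) A₂ α (sv y)) x :=
          ((h1fun_continuousOn (np*up) A₂ α hc2).continuousAt
            (Iio_mem_nhds hxn)).comp (hvC2.continuous.continuousAt)
        exact (continuousAt_const.mul ((hnC2.continuous.continuousAt).mul
            (hsv1.continuous.continuousAt))).mul
          ((ch.mul (hsv1.continuous.continuousAt)).add
           ((hnC2.continuous.continuousAt).mul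
            ((hvC2.continuous.continuousAt).sub (huC2.continuous.continuousAt))))
      have hftc : ∫ x in (0:ℝ)..R,
          (2 * (sn x * deriv sv x) *
            (h1fun (np*up) A₂ α (sv x) * deriv sv x + sn x * (sv x - su x)))
          = (sn R * deriv sv R)^2 - (sn 0 * deriv sv 0)^2 := by
        apply intervalIntegral.integral_eq_sub_of_hasDeriv_right_of_le hR
        · exact ((hnC2.continuous.mul hsv1.continuous).pow 2).continuousOn
        · intro x hx
          have H : HasDerivAt (fun y => (sn y * deriv sv y) ^ 2)
              ((2:ℕ) * (sn x * deriv sv x) ^ 1 * deriv (fun y => sn y * deriv sv y) x) x :=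
            (((hsnD x).mul (hsvD2 x)).hasDerivAt).pow 2
          refine (hasDerivAt_congr_deriv H ?_).hasDerivWithinAt
          have e2 := keyD x hx.1
          push_cast
          rw [pow_one]
          linear_combination (2 * (sn x * deriv sv x)) * e2
        · apply ContinuousOn.intervalIntegrable
          rwa [uIcc_of_le hR]
      have hIvR : ∫ x in (0:ℝ)..R, deriv sv x ^ 2 ≤ Iv := by
        rw [hIvdef]; exact hcut _ hIv (fun x => sq_nonneg _) R hR
      have hIwR : ∫ x in (0:ℝ)..R, (sv x - su x) ^ 2 ≤ Iw := by
        rw [hIwdef]; exact hcut _ hIw (fun x => sq_nonneg _) R hR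
      have hmono : ∫ x in (0:ℝ)..R,
          (-((4*np*K₂+4*np^2) * deriv sv x ^ 2 + 4*np^2*(sv x - su x)^2))
          ≤ ∫ x in (0:ℝ)..R,
          (2 * (sn x * deriv sv x) *
            (h1fun (np*up) A₂ α (sv x) * deriv sv x + sn x * (sv x - su x))) := by
        apply intervalIntegral.integral_mono_on hR
        · exact (((continuous_const.mul (hsv1.continuous.pow 2)).add
            (continuous_const.mul ((hvC2.continuous.sub huC2.continuous).pow 2))).neg).intervalIntegrable _ _
        · apply ContinuousOn.intervalIntegrable; rwa [uIcc_of_le hR]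
        · intro x hx
          have hKx := abs_le.mp (hK₂ (sv x) (hsvR x hx.1))
          have hb := hsnB x hx.1
          have h0 : (0:ℝ) ≤ sn x := by linarith only [hb.1, hn]
          have t1 : (0:ℝ) ≤ sn x * (h1fun (np*up) A₂ α (sv x) + K₂) * deriv sv x ^ 2 :=
            mul_nonneg (mul_nonneg h0 (by linarith only [hKx.1])) (sq_nonneg _)
          have t2 : (0:ℝ) ≤ K₂ * (2*np - sn x) * deriv sv x ^ 2 :=
            mul_nonneg (mul_nonneg hK₂pos.le (by linarith only [hb.2])) (sq_nonneg _)
          have t3 : (0:ℝ) ≤ (sn x * deriv sv x + sn x * (sv x - su x))^2 := sq_nonneg _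
          have t4 : (0:ℝ) ≤ (2*np - sn x) * ((2*np + sn x) * (deriv sv x ^ 2 + (sv x - su x)^2)) :=
            mul_nonneg (by linarith only [hb.2])
              (mul_nonneg (by linarith only [h0, hn]) (add_nonneg (sq_nonneg _) (sq_nonneg _)))
          linarith only [t1, t2, t3, t4]
      have hneg : ∫ x in (0:ℝ)..R, (-((4*np*K₂+4*np^2) * deriv sv x ^ 2 + 4*np^2*(sv x - su x)^2))
          = -((4*np*K₂+4*np^2) * (∫ x in (0:ℝ)..R, deriv sv x ^ 2)
              + 4*np^2*(∫ x in (0:ℝ)..R, (sv x - su x)^2)) := by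
        rw [intervalIntegral.integral_neg, intervalIntegral.integral_add
          (f := fun x => (4*np*K₂+4*np^2) * deriv sv x ^ 2) (g := fun x => 4*np^2*(sv x - su x)^2)
          ((continuous_const.mul (hsv1.continuous.pow 2)).intervalIntegrable _ _)
          ((continuous_const.mul ((hvC2.continuous.sub huC2.continuous).pow 2)).intervalIntegrable _ _),
          intervalIntegral.integral_const_mul, intervalIntegral.integral_const_mul]
      have m1 : (4*np*K₂+4*np^2) * (∫ x in (0:ℝ)..R, deriv sv x ^ 2) ≤ (4*np*K₂+4*np^2) * Iv :=
        mul_le_mul_of_nonneg_left hIvR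
          (by linarith only [mul_pos hn hK₂pos, sq_nonneg np])
      have m2 : 4*np^2*(∫ x in (0:ℝ)..R, (sv x - su x)^2) ≤ 4*np^2*Iw :=
        mul_le_mul_of_nonneg_left hIwR (by linarith only [sq_nonneg np])
      rw [hneg, hftc] at hmono
      linarith only [hmono, m1, m2]
    have hlim : Tendsto (fun R => (sn R * deriv sv R)^2 + ((4*np*K₂+4*np^2)*Iv + 4*np^2*Iw)) atTop
        (nhds ((np*(0:ℝ))^2 + ((4*np*K₂+4*np^2)*Iv + 4*np^2*Iw))) :=
      ((tn.mul tdv).pow 2).add_const _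
    have hev : ∀ᶠ R in atTop, (sn 0 * deriv sv 0)^2
        ≤ (sn R * deriv sv R)^2 + ((4*np*K₂+4*np^2)*Iv + 4*np^2*Iw) := by
      filter_upwards [eventually_ge_atTop (0:ℝ)] with R hR using key R hR
    have hle := ge_of_tendsto hlim hev
    simpa using hle
  have hsn0 := hsnB 0 le_rfl
  set X : ℝ := |deriv su 0| + |deriv sv 0| with hXdef
  clear_value X
  have hXnn : 0 ≤ X := by rw [hXdef]; positivity
  set B : ℝ := a0*δ^2 + b0*δ*X with hBdef
  clear_value B
  have hPB : - P 0 ≤ B := by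
    have h : μ*|deriv su 0| + 2*np*|deriv sv 0| ≤ b0 * X := by
      rw [hXdef, hb0def]
      have u1 : (0:ℝ) ≤ 2*np*|deriv su 0| := by positivity
      have u2 : (0:ℝ) ≤ μ*|deriv sv 0| := by positivity
      linarith only [u1, u2]
    have h2 : δ*(μ*|deriv su 0| + 2*np*|deriv sv 0|) ≤ δ*(b0*X) :=
      mul_le_mul_of_nonneg_left h hδ0
    rw [hBdef]
    have e : δ*(b0*X) = b0*δ*X := by ring
    linarith only [hP0, h2, e]
  have hIuB : Iu ≤ B/μ := by
    rw [le_div_iff₀ hμ]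
    linarith only [hEu, hPB]
  have hIvB : Iv ≤ 3/(2*np)*B := by
    have h := le_trans hEv hPB
    have h2 : 3/(2*np)*((2*np/3)*Iv) ≤ 3/(2*np)*B :=
      mul_le_mul_of_nonneg_left h (by positivity)
    have h3 : 3/(2*np)*((2*np/3)*Iv) = Iv := by field_simp
    linarith only [h2, h3]
  have hIwB : Iw ≤ 3/(2*np)*B := by
    have h := le_trans hEw hPB
    have h2 : 3/(2*np)*((2*np/3)*Iw) ≤ 3/(2*np)*B :=
      mul_le_mul_of_nonneg_left h (by positivity)
    have h3 : 3/(2*np)*((2*np/3)*Iw) = Iw := by field_simp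
    linarith only [h2, h3]
  have hdu2 : (deriv su 0)^2 ≤ cc1 * B := by
    have m2 : (2*K₁+2*np)*Iu ≤ (2*K₁+2*np)*(B/μ) :=
      mul_le_mul_of_nonneg_left hIuB (by linarith only [hK₁pos, hn])
    have m3 : 2*np*Iw ≤ 2*np*(3/(2*np)*B) := mul_le_mul_of_nonneg_left hIwB (by linarith only [hn])
    have m4 : 2*np*(3/(2*np)*B) = 3*B := by field_simp
    have e : (2*K₁+2*np)*(B/μ) = ((2*K₁+2*np)/μ)*B := by ring
    have m5 : μ*(deriv su 0)^2 ≤ ((2*K₁+2*np)/μ)*B + 3*B := by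
      linarith only [hstep2u, m2, m3, m4, e]
    rw [hcc1def, div_mul_eq_mul_div, le_div_iff₀ hμ]
    linarith only [m5]
  have hdv2 : (deriv sv 0)^2 ≤ cc2 * B := by
    have hb : 4*np^2/9*(deriv sv 0)^2 ≤ (sn 0 * deriv sv 0)^2 := by
      have h0 : (0:ℝ) ≤ 2*np/3 := by linarith only [hn]
      have h1 : (2*np/3)^2 ≤ (sn 0)^2 := pow_le_pow_left₀ h0 hsn0.1 2
      have h2 := mul_le_mul_of_nonneg_right h1 (sq_nonneg (deriv sv 0))
      have e1 : 4*np^2/9*(deriv sv 0)^2 = (2*np/3)^2*(deriv sv 0)^2 := by ring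
      have e2 : (sn 0)^2*(deriv sv 0)^2 = (sn 0 * deriv sv 0)^2 := by ring
      linarith only [h2, e1, e2]
    have m2 : (4*np*K₂+4*np^2)*Iv ≤ (4*np*K₂+4*np^2)*(3/(2*np)*B) :=
      mul_le_mul_of_nonneg_left hIvB (by linarith only [mul_pos hn hK₂pos, sq_nonneg np])
    have m3 : 4*np^2*Iw ≤ 4*np^2*(3/(2*np)*B) :=
      mul_le_mul_of_nonneg_left hIwB (by linarith only [sq_nonneg np])
    have e2 : (4*np*K₂+4*np^2)*(3/(2*np)*B) = (6*K₂+6*np)*B := by field_simp; ring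
    have e3 : 4*np^2*(3/(2*np)*B) = 6*np*B := by field_simp; ring
    have m5 : (sn 0*deriv sv 0)^2 ≤ (6*K₂+12*np)*B := by
      linarith only [hstep2v, m2, m3, e2, e3]
    have m6 := le_trans hb m5
    rw [hcc2def, div_mul_eq_mul_div, div_mul_eq_mul_div,
      le_div_iff₀ (by positivity : (0:ℝ) < 4*np^2)]
    linarith only [m6]
  have hBnn : 0 ≤ B := le_trans (by linarith only [hEu, mul_nonneg hμ.le hIunn]) hPB
  have hX2 : X^2 ≤ aC*δ^2 + bC*δ*X := by
    have h1 : X^2 ≤ 2*((deriv su 0)^2 + (deriv sv 0)^2) := by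
      rw [hXdef]
      have e1 : |deriv su 0|^2 = (deriv su 0)^2 := sq_abs _
      have e2 : |deriv sv 0|^2 = (deriv sv 0)^2 := sq_abs _
      linarith only [sq_nonneg (|deriv su 0| - |deriv sv 0|), e1, e2]
    have h2 : 2*(cc1*B + cc2*B) = aC*δ^2 + bC*δ*X := by
      rw [haCdef, hbCdef, hBdef]; ring
    linarith only [h1, hdu2, hdv2, h2]
  have hXle : X ≤ (aC+bC+1)*δ := by
    by_contra hcon
    push_neg at hcon
    have hcd0 : 0 ≤ (aC+bC+1)*δ := mul_nonneg (by linarith only [haCpos, hbCpos]) hδ0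
    have hXpos : 0 < X := lt_of_le_of_lt hcd0 hcon
    have p1 : 0 < (X - (aC+bC+1)*δ) * X := mul_pos (by linarith only [hcon]) hXpos
    have p2 : 0 ≤ (aC+1) * (δ * (X - (aC+bC+1)*δ)) :=
      mul_nonneg (by linarith only [haCpos]) (mul_nonneg hδ0 (by linarith only [hcon]))
    have q1 : (0:ℝ) ≤ aC*(aC*δ^2) := mul_nonneg haCpos.le (mul_nonneg haCpos.le (sq_nonneg δ))
    have q2 : (0:ℝ) ≤ aC*(bC*δ^2) := mul_nonneg haCpos.le (mul_nonneg hbCpos.le (sq_nonneg δ))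
    have q3 : (0:ℝ) ≤ aC*δ^2 := mul_nonneg haCpos.le (sq_nonneg δ)
    have q4 : (0:ℝ) ≤ bC*δ^2 := mul_nonneg hbCpos.le (sq_nonneg δ)
    have q5 : (0:ℝ) ≤ δ^2 := sq_nonneg δ
    linarith only [hX2, p1, p2, q1, q2, q3, q4, q5]
  constructor
  · have h : |deriv su 0| ≤ X := by rw [hXdef]; linarith only [abs_nonneg (deriv sv 0)]
    calc |deriv su 0| ≤ X := h
      _ ≤ (aC+bC+1)*δ := hXle
  · have h : |deriv sv 0| ≤ X := by rw [hXdef]; linarith only [abs_nonneg (deriv su 0)]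
    calc |deriv sv 0| ≤ X := h
      _ ≤ (aC+bC+1)*δ := hXle
end

section
/- (Riccati-type decay bounds.) Let a > 0 and K ≥ 0. There exist constants δ₀ > 0, c > 0 and C > 0, depending only on a and K, such that for every δ with 0 < δ ≤ δ₀ and every differentiable function σ : [0,∞) → ℝ with σ(0) = δ and |σ'(x) + a σ(x)²| ≤ K|σ(x)|³ for all x ≥ 0, one has: σ(x) > 0 for all x ≥ 0, c·δ/(1+δx) ≤ σ(x) ≤ C·δ/(1+δx) for all x ≥ 0, and |σ'(x)| ≤ C·δ²/(1+δx)² for all x ≥ 0. -/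
open Set Filter Topology

/-- pointwise consequences of the Riccati inequality -/
private lemma riccati_arith (a K s d : ℝ) (ha : 0 < a) (hK : 0 ≤ K) (hs : 0 < s)
    (hKs : K * s ≤ a / 2) (h : |d + a * s ^ 2| ≤ K * |s| ^ 3) :
    d ≤ -(a/2) * s ^ 2 ∧ |d| ≤ (3*a/2) * s ^ 2 := by
  rw [abs_of_pos hs] at h
  rw [abs_le] at h
  have key : K * s * s ^ 2 ≤ a / 2 * s ^ 2 := mul_le_mul_of_nonneg_right hKs (sq_nonneg s)
  refine ⟨by nlinarith [h.1, h.2], ?_⟩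
  rw [abs_le]
  constructor <;> nlinarith [h.1, h.2]

/-- reciprocal bounds on an interval where positivity and σ ≤ δ are known -/
private lemma riccati_recip (a K δ : ℝ) (ha : 0 < a) (hK : 0 ≤ K) (hδ : 0 < δ)
    (hKδ : K * δ ≤ a / 2)
    (σ : ℝ → ℝ) (hdiff : ∀ x ≥ (0:ℝ), DifferentiableAt ℝ σ x) (hσ0 : σ 0 = δ)
    (hineq : ∀ x ≥ (0:ℝ), |deriv σ x + a * σ x ^ 2| ≤ K * |σ x| ^ 3)
    (s : ℝ) (hs : 0 ≤ s)
    (hpos : ∀ t ∈ Icc (0:ℝ) s, 0 < σ t) (hle : ∀ t ∈ Icc (0:ℝ) s, σ t ≤ δ) :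
    1/δ + (a/2) * s ≤ (σ s)⁻¹ ∧ (σ s)⁻¹ ≤ 1/δ + (3*a/2) * s := by
  have h0mem : (0:ℝ) ∈ Icc (0:ℝ) s := ⟨le_refl 0, hs⟩
  have hsmem : s ∈ Icc (0:ℝ) s := ⟨hs, le_refl s⟩
  -- derivative facts
  have hder : ∀ c : ℝ, ∀ t ∈ Icc (0:ℝ) s,
      HasDerivAt (fun y => (σ y)⁻¹ - c * y) (-(deriv σ t) / σ t ^ 2 - c) t := by
    intro c t ht
    have h1 : HasDerivAt (fun y => (σ y)⁻¹) (-(deriv σ t) / σ t ^ 2) t :=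
      ((hdiff t ht.1).hasDerivAt).inv (hpos t ht).ne'
    have h2 : HasDerivAt (fun y : ℝ => c * y) c t := by
      simpa using (hasDerivAt_id t).const_mul c
    exact h1.sub h2
  have hKt : ∀ t ∈ Icc (0:ℝ) s, K * σ t ≤ a / 2 := fun t ht =>
    le_trans (mul_le_mul_of_nonneg_left (hle t ht) hK) hKδ
  have habs : ∀ t ∈ Icc (0:ℝ) s,
      deriv σ t ≤ -(a/2) * σ t ^ 2 ∧ |deriv σ t| ≤ (3*a/2) * σ t ^ 2 := fun t ht =>
    riccati_arith a K (σ t) (deriv σ t) ha hK (hpos t ht) (hKt t ht) (hineq t ht.1)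
  have hIcc : interior (Icc (0:ℝ) s) ⊆ Icc (0:ℝ) s := interior_subset
  constructor
  · -- monotone: (σ t)⁻¹ - (a/2) t is monotone
    have hmono : MonotoneOn (fun y => (σ y)⁻¹ - (a/2) * y) (Icc (0:ℝ) s) := by
      apply monotoneOn_of_deriv_nonneg (convex_Icc 0 s)
      · exact fun t ht => (hder (a/2) t ht).continuousAt.continuousWithinAt
      · exact fun t ht => ((hder (a/2) t (hIcc ht)).differentiableAt).differentiableWithinAt
      · intro t ht
        rw [(hder (a/2) t (hIcc ht)).deriv]
        have hp := hpos t (hIcc ht)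
        have hb := (habs t (hIcc ht)).1
        have hsq : (0:ℝ) < σ t ^ 2 := by positivity
        rw [sub_nonneg, le_div_iff₀ hsq]
        nlinarith
    have := hmono h0mem hsmem hs
    simp only [hσ0, mul_zero, sub_zero] at this
    rw [one_div]
    linarith
  · have hanti : AntitoneOn (fun y => (σ y)⁻¹ - (3*a/2) * y) (Icc (0:ℝ) s) := by
      apply antitoneOn_of_deriv_nonpos (convex_Icc 0 s)
      · exact fun t ht => (hder (3*a/2) t ht).continuousAt.continuousWithinAt
      · exact fun t ht => ((hder (3*a/2) t (hIcc ht)).differentiableAt).differentiableWithinAt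
      · intro t ht
        rw [(hder (3*a/2) t (hIcc ht)).deriv]
        have hp := hpos t (hIcc ht)
        have hb := (habs t (hIcc ht)).2
        have hb' : -(deriv σ t) ≤ (3*a/2) * σ t ^ 2 := by
          have := (abs_le.1 hb).1; linarith
        have hsq : (0:ℝ) < σ t ^ 2 := by positivity
        rw [sub_nonpos, div_le_iff₀ hsq]
        nlinarith
    have := hanti h0mem hsmem hs
    simp only [hσ0, mul_zero, sub_zero] at this
    rw [one_div]
    linarith

/-- global positivity and boundedness by δ -/
private lemma riccati_pos (a K δ : ℝ) (ha : 0 < a) (hK : 0 ≤ K) (hδ : 0 < δ)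
    (hKδ : K * δ ≤ a / 2)
    (σ : ℝ → ℝ) (hdiff : ∀ x ≥ (0:ℝ), DifferentiableAt ℝ σ x) (hσ0 : σ 0 = δ)
    (hineq : ∀ x ≥ (0:ℝ), |deriv σ x + a * σ x ^ 2| ≤ K * |σ x| ^ 3) :
    ∀ x ≥ (0:ℝ), 0 < σ x ∧ σ x ≤ δ := by
  by_contra hcon
  set E : Set ℝ := {x | 0 ≤ x ∧ ¬(0 < σ x ∧ σ x ≤ δ)} with hE
  have hne : E.Nonempty := by
    by_contra hne'
    exact hcon fun x hx => by
      by_contra hPx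
      exact hne' ⟨x, hx, hPx⟩
  have hbdd : BddBelow E := ⟨0, fun x hx => hx.1⟩
  set t₀ := sInf E with ht₀def
  have ht₀ : 0 ≤ t₀ := le_csInf hne fun x hx => hx.1
  have hbefore : ∀ t, 0 ≤ t → t < t₀ → 0 < σ t ∧ σ t ≤ δ := by
    intro t h0 hlt
    by_contra hc
    exact absurd (csInf_le hbdd ⟨h0, hc⟩) (not_le.2 hlt)
  have hcont : ContinuousAt σ t₀ := (hdiff t₀ ht₀).continuousAt
  have htend : Tendsto σ (𝓝[<] t₀) (𝓝 (σ t₀)) :=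
    hcont.continuousWithinAt.tendsto
  -- P holds at t₀
  have hPt₀ : 0 < σ t₀ ∧ σ t₀ ≤ δ := by
    rcases eq_or_lt_of_le ht₀ with h0 | h0
    · rw [← h0, hσ0]; exact ⟨hδ, le_refl δ⟩
    · have hIoo : Ioo 0 t₀ ∈ 𝓝[<] t₀ := Ioo_mem_nhdsLT_of_mem ⟨h0, le_refl t₀⟩
      have hub : σ t₀ ≤ δ := by
        refine le_of_tendsto htend ?_
        filter_upwards [hIoo] with t ht
        exact (hbefore t ht.1.le ht.2).2
      have hlb : (1/δ + (3*a/2) * t₀)⁻¹ ≤ σ t₀ := by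
        refine ge_of_tendsto htend ?_
        filter_upwards [hIoo] with t ht
        have hp : ∀ u ∈ Icc (0:ℝ) t, 0 < σ u ∧ σ u ≤ δ := fun u hu =>
          hbefore u hu.1 (lt_of_le_of_lt hu.2 ht.2)
        have hrec := (riccati_recip a K δ ha hK hδ hKδ σ hdiff hσ0 hineq t ht.1.le
          (fun u hu => (hp u hu).1) (fun u hu => (hp u hu).2)).2
        have h1 : 0 < σ t := (hp t ⟨ht.1.le, le_refl t⟩).1
        have h2 : (0:ℝ) < 1/δ + (3*a/2) * t₀ := by positivity
        have h3 : (σ t)⁻¹ ≤ 1/δ + (3*a/2) * t₀ := by nlinarith [ht.2.le]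
        calc (1/δ + (3*a/2) * t₀)⁻¹ ≤ ((σ t)⁻¹)⁻¹ := by
              exact inv_anti₀ (by positivity) h3
          _ = σ t := inv_inv _
      exact ⟨lt_of_lt_of_le (by positivity) hlb, hub⟩
  -- right of t₀ : eventually σ ≤ δ and σ > 0
  have hub : ∀ᶠ t in 𝓝[>] t₀, σ t ≤ δ := by
    rcases lt_or_eq_of_le hPt₀.2 with hlt | heq
    · have : ∀ᶠ t in 𝓝 t₀, σ t < δ := hcont.eventually_lt_const hlt
      exact (this.filter_mono nhdsWithin_le_nhds).mono fun t ht => ht.le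
    · -- σ t₀ = δ, use negative derivative
      have hd := (hdiff t₀ ht₀).hasDerivAt
      have hKt : K * σ t₀ ≤ a / 2 := by rw [heq]; exact hKδ
      have hneg : deriv σ t₀ ≤ -(a/2) * σ t₀ ^ 2 :=
        (riccati_arith a K (σ t₀) (deriv σ t₀) ha hK hPt₀.1 hKt (hineq t₀ ht₀)).1
      have hneg' : deriv σ t₀ < 0 := lt_of_le_of_lt hneg (by nlinarith [mul_pos (half_pos ha) (pow_pos hPt₀.1 2)])
      have hslope := hasDerivAt_iff_tendsto_slope.1 hd
      have hev : ∀ᶠ z in 𝓝[≠] t₀, slope σ t₀ z < 0 :=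
        hslope.eventually_lt_const hneg'
      have hmono : 𝓝[>] t₀ ≤ 𝓝[≠] t₀ :=
        nhdsWithin_mono t₀ fun z hz => ne_of_gt hz
      filter_upwards [hev.filter_mono hmono, self_mem_nhdsWithin] with z hz hz'
      rw [slope_def_field] at hz
      have hzpos : 0 < z - t₀ := sub_pos.2 hz'
      have : σ z - σ t₀ < 0 := by
        have := (div_neg_iff.1 hz)
        rcases this with ⟨h1, h2⟩ | ⟨h1, h2⟩
        · exact absurd hzpos (not_lt.2 h2.le)
        · exact h1
      rw [← heq]; linarith [this]
  have hposev : ∀ᶠ t in 𝓝[>] t₀, 0 < σ t :=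
    (hcont.eventually_const_lt hPt₀.1).filter_mono nhdsWithin_le_nhds
  obtain ⟨u, hu, huP⟩ := mem_nhdsGT_iff_exists_Ioo_subset.1 (hub.and hposev)
  obtain ⟨e, heE, heu⟩ := exists_lt_of_csInf_lt hne (show sInf E < u from lt_of_le_of_lt (le_refl _) (by rw [← ht₀def] at *; exact hu))
  have het₀ : t₀ ≤ e := csInf_le hbdd heE
  rcases eq_or_lt_of_le het₀ with he | he
  · exact heE.2 (by rw [← he]; exact hPt₀)
  · have := huP ⟨he, heu⟩
    exact heE.2 ⟨this.2, this.1⟩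

set_option maxHeartbeats 2000000 in
/-- Riccati-type decay bounds for the function σ. -/
theorem stmt13 (a K : ℝ) (ha : 0 < a) (hK : 0 ≤ K) :
    ∃ δ₀ > 0, ∃ c > 0, ∃ C > 0, ∀ δ : ℝ, 0 < δ → δ ≤ δ₀ →
      ∀ σ : ℝ → ℝ, (∀ x ≥ (0:ℝ), DifferentiableAt ℝ σ x) → σ 0 = δ →
        (∀ x ≥ (0:ℝ), |deriv σ x + a * σ x ^ 2| ≤ K * |σ x| ^ 3) →
        ∀ x ≥ (0:ℝ), 0 < σ x ∧
          c * δ / (1 + δ * x) ≤ σ x ∧ σ x ≤ C * δ / (1 + δ * x) ∧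
          |deriv σ x| ≤ C * δ ^ 2 / (1 + δ * x) ^ 2 := by
  set C₁ : ℝ := max 1 (2/a) with hC₁def
  have hC1 : (1:ℝ) ≤ C₁ := le_max_left _ _
  have hC1pos : (0:ℝ) < C₁ := lt_of_lt_of_le one_pos hC1
  have hC2a : 2 ≤ C₁ * a := by
    have := le_max_right 1 (2/a)
    rw [div_le_iff₀ ha] at this
    linarith
  set C : ℝ := C₁ + (3*a/2) * C₁^2 with hCdef
  have hCpos : 0 < C := by positivity
  have hC1C : C₁ ≤ C := by
    have : (0:ℝ) ≤ 3*a/2*C₁^2 := by positivity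
    rw [hCdef]; linarith
  set c : ℝ := min 1 (2/(3*a)) with hcdef
  have hcpos : 0 < c := lt_min one_pos (by positivity)
  have hc1 : c ≤ 1 := min_le_left _ _
  have hc2 : c * (3*a) ≤ 2 := by
    have := min_le_right 1 (2/(3*a))
    rw [le_div_iff₀ (by positivity : (0:ℝ) < 3*a)] at this
    linarith
  clear_value C₁ C c
  refine ⟨a/(2*K+2), by positivity, c, hcpos, C, hCpos, ?_⟩
  intro δ hδ hδ₀ σ hdiff hσ0 hineq x hx
  have h2K : (0:ℝ) < 2*K+2 := by linarith
  have hKδ : K * δ ≤ a / 2 := by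
    have h1 : K * δ ≤ K * (a/(2*K+2)) := mul_le_mul_of_nonneg_left hδ₀ hK
    have h2 : K * (a/(2*K+2)) ≤ a / 2 := by
      rw [← mul_div_assoc, div_le_div_iff₀ h2K two_pos]
      nlinarith
    linarith
  have hP := riccati_pos a K δ ha hK hδ hKδ σ hdiff hσ0 hineq
  have hσx : 0 < σ x := (hP x hx).1
  have hσxδ : σ x ≤ δ := (hP x hx).2
  have hrec := riccati_recip a K δ ha hK hδ hKδ σ hdiff hσ0 hineq x hx
    (fun t ht => (hP t ht.1).1) (fun t ht => (hP t ht.1).2)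
  have hδx : 0 ≤ δ * x := mul_nonneg hδ.le hx
  have hpos1 : (0:ℝ) < 1 + δ * x := by linarith
  -- convert reciprocal bounds to clean product form
  have e1 : δ * σ x * (σ x)⁻¹ = δ := by field_simp
  have key2 : σ x * (1 + (a/2)*(δ*x)) ≤ δ := by
    have h := mul_le_mul_of_nonneg_left hrec.1 (by positivity : (0:ℝ) ≤ δ * σ x)
    rw [e1] at h
    have e2 : δ * σ x * (1/δ + (a/2)*x) = σ x * (1 + (a/2)*(δ*x)) := by
      field_simp
    rw [e2] at h
    exact h
  have key1 : δ ≤ σ x * (1 + (3*a/2)*(δ*x)) := by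
    have h := mul_le_mul_of_nonneg_left hrec.2 (by positivity : (0:ℝ) ≤ δ * σ x)
    rw [e1] at h
    have e2 : δ * σ x * (1/δ + (3*a/2)*x) = σ x * (1 + (3*a/2)*(δ*x)) := by
      field_simp
    rw [e2] at h
    exact h
  -- upper bound in product form
  have hupper1 : σ x * (1 + δ * x) ≤ C₁ * δ := by
    nlinarith [mul_le_mul_of_nonneg_left key2 hC1pos.le,
      mul_nonneg (sub_nonneg.2 hC1) hσx.le,
      mul_nonneg (sub_nonneg.2 hC2a) (mul_nonneg hσx.le hδx)]
  refine ⟨hσx, ?_, ?_, ?_⟩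
  · rw [div_le_iff₀ hpos1]
    nlinarith [mul_le_mul_of_nonneg_left key1 hcpos.le,
      mul_nonneg (sub_nonneg.2 hc1) hσx.le,
      mul_nonneg (sub_nonneg.2 hc2) (mul_nonneg hσx.le hδx)]
  · rw [le_div_iff₀ hpos1]
    calc σ x * (1 + δ * x) ≤ C₁ * δ := hupper1
      _ ≤ C * δ := mul_le_mul_of_nonneg_right hC1C hδ.le
  · have hKx : K * σ x ≤ a / 2 :=
      le_trans (mul_le_mul_of_nonneg_left hσxδ hK) hKδ
    have habs : |deriv σ x| ≤ (3*a/2) * σ x ^ 2 :=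
      (riccati_arith a K (σ x) (deriv σ x) ha hK hσx hKx (hineq x hx)).2
    rw [le_div_iff₀ (by positivity : (0:ℝ) < (1 + δ*x)^2)]
    have hsq : (σ x * (1 + δ * x))^2 ≤ (C₁ * δ)^2 := by
      apply pow_le_pow_left₀ (by positivity) hupper1
    have s1 : |deriv σ x| * (1 + δ*x)^2 ≤ ((3*a/2) * σ x ^ 2) * (1 + δ*x)^2 :=
      mul_le_mul_of_nonneg_right habs (sq_nonneg _)
    have s2 : ((3*a/2) * σ x ^ 2) * (1 + δ*x)^2 = (3*a/2) * (σ x * (1 + δ*x))^2 := by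
      ring
    have s3 : (3*a/2) * (σ x * (1 + δ*x))^2 ≤ (3*a/2) * (C₁*δ)^2 :=
      mul_le_mul_of_nonneg_left hsq (by positivity)
    have s4 : (3*a/2) * (C₁*δ)^2 ≤ C * δ^2 := by
      have h0 : (0:ℝ) ≤ C₁ * δ^2 := by positivity
      have h1 : (3*a/2) * (C₁*δ)^2 = (3*a/2*C₁^2) * δ^2 := by ring
      rw [h1, hCdef]
      nlinarith
    linarith
end
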